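/- arXiv:0801.4240 — 4 statements merged into one kernel-verified Lean document; each statement's English description precedes it below -/
import Mathlib

section
/- Equilibrium identity for Maxwell molecules: for every bounded measurable function ψ : ℝ³ → ℝ, the integral ∫_{ℝ³×ℝ³×S²} |q̃·n| · M(v) · M₁(w) · (ψ(v⋆) − ψ(v)) dn dw dv equals 0. (In other words, the Maxwellian M with temperature Θ# is an equilibrium of the linear inelastic Boltzmann operator with Maxwell-molecules kernel, in weak form.) -/
open MeasureTheory Metric Real
open scoped RealInnerProductSpace ENNReal

noncomputable section

/-- `ℝ³` as a Euclidean space. -/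
abbrev E3 := EuclideanSpace ℝ (Fin 3)

/-- The unit sphere `S² ⊂ ℝ³`. -/
abbrev Sph := Metric.sphere (0 : E3) 1

/-- The surface measure on the unit sphere `S² ⊂ ℝ³`. -/
noncomputable def sphMeasure : Measure Sph := (volume : Measure E3).toSphere

/-- The product measure on `ℝ³ × ℝ³ × S²` (velocities `v`, `w` and impact direction `n`). -/
noncomputable def colProd : Measure (E3 × E3 × Sph) :=
  (volume : Measure E3).prod ((volume : Measure E3).prod sphMeasure)

/-- The Maxwellian with mass `m`, temperature `Θ` and bulk velocity `u`:
`(m/(2πΘ))^(3/2) exp(-m|v-u|²/(2Θ))`. -/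
noncomputable def maxwellian (m Θ : ℝ) (u v : E3) : ℝ :=
  (m / (2 * π * Θ)) ^ ((3 : ℝ) / 2) * Real.exp (- m * ‖v - u‖ ^ 2 / (2 * Θ))

/-- The post-collisional velocity `v⋆ = v - 2κ (q·n) n`, with `q = v - w`. -/
noncomputable def vstar (κ : ℝ) (v w : E3) (n : Sph) : E3 :=
  v - (2 * κ * ⟪v - w, (n : E3)⟫) • (n : E3)

/-- The hard-spheres collision kernel `|q·n|`, `q = v - w`. -/
noncomputable def khs (v w : E3) (n : Sph) : ℝ := |⟪v - w, (n : E3)⟫|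

/-- The Maxwell-molecules collision kernel `|q̃·n|`, `q̃ = q/|q|`, `q = v - w`
(arbitrary, i.e. `0`, when `q = 0`). -/
noncomputable def kmax (v w : E3) (n : Sph) : ℝ := |⟪‖v - w‖⁻¹ • (v - w), (n : E3)⟫|

namespace MaxEqAux

lemma norm_coe_sph (n : Sph) : ‖(n : E3)‖ = 1 := mem_sphere_zero_iff_norm.mp n.2

lemma inner_self_one {n : E3} (hn : ‖n‖ = 1) : ⟪n, n⟫ = 1 := by
  rw [real_inner_self_eq_norm_sq, hn]; norm_num

/-- Reflection across the hyperplane orthogonal to `n`, as a linear map. -/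
def reflLin (n : E3) : E3 →ₗ[ℝ] E3 where
  toFun q := q - (2 * ⟪q, n⟫) • n
  map_add' x y := by rw [inner_add_left]; module
  map_smul' c x := by simp only [RingHom.id_apply]; rw [real_inner_smul_left]; module

lemma reflLin_apply (n q : E3) : reflLin n q = q - (2 * ⟪q, n⟫) • n := rfl

lemma reflLin_invol (n : E3) (hn : ‖n‖ = 1) : Function.Involutive (reflLin n) := by
  intro q
  simp only [reflLin_apply]
  rw [inner_sub_left, real_inner_smul_left, inner_self_one hn]
  module

lemma refl_norm {n : E3} (hn : ‖n‖ = 1) (q : E3) : ‖q - (2 * ⟪q, n⟫) • n‖ = ‖q‖ := by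
  have h : ‖q - (2 * ⟪q, n⟫) • n‖ ^ 2 = ‖q‖ ^ 2 := by
    rw [norm_sub_sq_real, real_inner_smul_right, norm_smul, hn, mul_one]
    simp only [Real.norm_eq_abs, sq_abs]
    ring
  have := congrArg Real.sqrt h
  rwa [Real.sqrt_sq (norm_nonneg _), Real.sqrt_sq (norm_nonneg _)] at this

/-- Reflection as a linear isometry equivalence. -/
def reflIso (n : E3) (hn : ‖n‖ = 1) : E3 ≃ₗᵢ[ℝ] E3 :=
  ⟨LinearEquiv.ofInvolutive (reflLin n) (reflLin_invol n hn), fun q => refl_norm hn q⟩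

lemma reflIso_apply (n : E3) (hn : ‖n‖ = 1) (q : E3) :
    reflIso n hn q = q - (2 * ⟪q, n⟫) • n := rfl

/-- The linear change of variables `(v, w) ↦ ((1-κ)v + κw, v - w)`. -/
def Tlin (κ : ℝ) : (E3 × E3) ≃ₗ[ℝ] (E3 × E3) where
  toFun p := ((1 - κ) • p.1 + κ • p.2, p.1 - p.2)
  invFun p := (p.1 + κ • p.2, p.1 - (1 - κ) • p.2)
  map_add' p q := by apply Prod.ext <;> simp <;> module
  map_smul' c p := by apply Prod.ext <;> simp <;> module
  left_inv p := by apply Prod.ext <;> simp <;> module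
  right_inv p := by apply Prod.ext <;> simp <;> module

lemma Tlin_apply (κ : ℝ) (p : E3 × E3) :
    Tlin κ p = ((1 - κ) • p.1 + κ • p.2, p.1 - p.2) := rfl

/-- The collision map on `(v, w)` for a fixed direction `n`. -/
def Lmap (κ : ℝ) (n : E3) : E3 × E3 → E3 × E3 := fun p =>
  (p.1 - (2 * κ * ⟪p.1 - p.2, n⟫) • n, p.2 + (2 * (1 - κ) * ⟪p.1 - p.2, n⟫) • n)

lemma Lmap_cont (κ : ℝ) : Continuous fun q : E3 × (E3 × E3) => Lmap κ q.1 q.2 := by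
  have hn : Continuous fun q : E3 × (E3 × E3) => q.1 := continuous_fst
  have h1 : Continuous fun q : E3 × (E3 × E3) => q.2.1 := continuous_fst.comp continuous_snd
  have h2 : Continuous fun q : E3 × (E3 × E3) => q.2.2 := continuous_snd.comp continuous_snd
  have hin : Continuous fun q : E3 × (E3 × E3) => ⟪q.2.1 - q.2.2, q.1⟫ :=
    (h1.sub h2).inner hn
  exact ((h1.sub ((continuous_const.mul hin).smul hn)).prodMk
    (h2.add ((continuous_const.mul hin).smul hn)))

lemma Tlin_comp_Lmap (κ : ℝ) (n : E3) (hn : ‖n‖ = 1) :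
    ⇑(Tlin κ) ∘ Lmap κ n = (Prod.map id ⇑(reflIso n hn)) ∘ ⇑(Tlin κ) := by
  funext p
  obtain ⟨v, w⟩ := p
  simp only [Function.comp_apply, Lmap, Tlin_apply, Prod.map, id_eq, reflIso_apply]
  apply Prod.ext
  · show (1 - κ) • (v - (2 * κ * ⟪v - w, n⟫) • n) + κ • (w + (2 * (1 - κ) * ⟪v - w, n⟫) • n)
      = (1 - κ) • v + κ • w
    module
  · show (v - (2 * κ * ⟪v - w, n⟫) • n) - (w + (2 * (1 - κ) * ⟪v - w, n⟫) • n)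
      = (v - w) - (2 * ⟪v - w, n⟫) • n
    module

lemma Lmap_mp (κ : ℝ) (n : E3) (hn : ‖n‖ = 1) :
    MeasurePreserving (Lmap κ n) (volume : Measure (E3 × E3)) volume := by
  haveI : Measure.IsAddHaarMeasure (volume : Measure (E3 × E3)) := by
    rw [Measure.volume_eq_prod]; exact Measure.prod.instIsAddHaarMeasure _ _
  have hTm : Measurable ⇑(Tlin κ) :=
    (LinearMap.continuous_of_finiteDimensional ((Tlin κ) : (E3 × E3) →ₗ[ℝ] (E3 × E3))).measurable
  have hTm' : Measurable ⇑(Tlin κ).symm :=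
    (LinearMap.continuous_of_finiteDimensional
      ((Tlin κ).symm : (E3 × E3) →ₗ[ℝ] (E3 × E3))).measurable
  have hLc : Continuous (Lmap κ n) := (Lmap_cont κ).comp (Continuous.prodMk
    continuous_const continuous_id)
  have hdet : LinearMap.det ((Tlin κ) : (E3 × E3) →ₗ[ℝ] (E3 × E3)) ≠ 0 :=
    (LinearEquiv.isUnit_det' (Tlin κ)).ne_zero
  have hmapT : Measure.map ⇑(Tlin κ) volume =
      ENNReal.ofReal |(LinearMap.det ((Tlin κ) : (E3 × E3) →ₗ[ℝ] (E3 × E3)))⁻¹| • volume :=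
    Measure.map_linearMap_addHaar_eq_smul_addHaar volume hdet
  have hPR : Measure.map (Prod.map (id : E3 → E3) ⇑(reflIso n hn)) (volume : Measure (E3 × E3))
      = volume := by
    rw [Measure.volume_eq_prod]
    exact ((MeasurePreserving.id _).prod (reflIso n hn).measurePreserving).map_eq
  have hPRm : Measurable (Prod.map (id : E3 → E3) ⇑(reflIso n hn)) :=
    (measurable_id.prodMap (reflIso n hn).continuous.measurable)
  have h1 : Measure.map ⇑(Tlin κ) (Measure.map (Lmap κ n) volume)
      = Measure.map ⇑(Tlin κ) volume := by
    rw [Measure.map_map hTm hLc.measurable, Tlin_comp_Lmap κ n hn,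
      ← Measure.map_map hPRm hTm, hmapT, Measure.map_smul, hPR]
  have hid1 : ⇑(Tlin κ).symm ∘ ⇑(Tlin κ) = id := by
    funext x; exact (Tlin κ).symm_apply_apply x
  refine ⟨hLc.measurable, ?_⟩
  calc Measure.map (Lmap κ n) volume
      = Measure.map (⇑(Tlin κ).symm ∘ ⇑(Tlin κ)) (Measure.map (Lmap κ n) volume) := by
        rw [hid1, Measure.map_id]
    _ = Measure.map ⇑(Tlin κ).symm (Measure.map ⇑(Tlin κ) (Measure.map (Lmap κ n) volume)) :=
        (Measure.map_map hTm' hTm).symm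
    _ = Measure.map ⇑(Tlin κ).symm (Measure.map ⇑(Tlin κ) volume) := by rw [h1]
    _ = Measure.map (⇑(Tlin κ).symm ∘ ⇑(Tlin κ)) volume := Measure.map_map hTm' hTm
    _ = volume := by rw [hid1, Measure.map_id]



/-- The full collision involution on `ℝ³ × ℝ³ × S²`. -/
def Phi (κ : ℝ) : E3 × E3 × Sph → E3 × E3 × Sph := fun p =>
  (p.1 - (2 * κ * ⟪p.1 - p.2.1, (p.2.2 : E3)⟫) • (p.2.2 : E3),
   p.2.1 + (2 * (1 - κ) * ⟪p.1 - p.2.1, (p.2.2 : E3)⟫) • (p.2.2 : E3),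
   p.2.2)

lemma Phi_meas (κ : ℝ) : Measurable (Phi κ) := by
  have h1 : Continuous fun p : E3 × E3 × Sph => ((p.2.2 : E3), (p.1, p.2.1)) :=
    ((continuous_subtype_val.comp (continuous_snd.comp continuous_snd)).prodMk
      (continuous_fst.prodMk (continuous_fst.comp continuous_snd)))
  have h2 := (Lmap_cont κ).comp h1
  have : Continuous (Phi κ) := by
    refine Continuous.prodMk ?_ (Continuous.prodMk ?_ ?_)
    · exact continuous_fst.comp h2
    · exact continuous_snd.comp h2
    · exact continuous_snd.comp continuous_snd
  exact this.measurable

lemma Phi_mp (κ : ℝ) : MeasurePreserving (Phi κ) colProd colProd := by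
  haveI hμ6 : SFinite ((volume : Measure E3).prod (volume : Measure E3)) := by infer_instance
  haveI hsph : SFinite sphMeasure := by unfold sphMeasure; infer_instance
  -- the skew product on Sph × (E3 × E3)
  have hG : MeasurePreserving (fun q : Sph × (E3 × E3) => (q.1, Lmap κ (q.1 : E3) q.2))
      (sphMeasure.prod ((volume : Measure E3).prod volume))
      (sphMeasure.prod ((volume : Measure E3).prod volume)) := by
    refine MeasurePreserving.skew_product (f := (id : Sph → Sph))
        (g := fun (a : Sph) (p : E3 × E3) => Lmap κ (a : E3) p)
        (μd := (volume : Measure E3).prod volume)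
        (MeasurePreserving.id sphMeasure) ?_ (Filter.Eventually.of_forall fun n => ?_)
    · exact ((Lmap_cont κ).comp ((continuous_subtype_val.comp continuous_fst).prodMk
        continuous_snd)).measurable
    · have := (Lmap_mp κ (n : E3) (norm_coe_sph n)).map_eq
      rwa [Measure.volume_eq_prod] at this
  have hA : MeasurePreserving (MeasurableEquiv.prodAssoc :
      (E3 × E3) × Sph ≃ᵐ E3 × E3 × Sph)
      (((volume : Measure E3).prod volume).prod sphMeasure) colProd :=
    measurePreserving_prodAssoc _ _ _
  have hS1 : MeasurePreserving (Prod.swap : ((E3 × E3) × Sph) → Sph × (E3 × E3))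
      (((volume : Measure E3).prod volume).prod sphMeasure)
      (sphMeasure.prod ((volume : Measure E3).prod volume)) := Measure.measurePreserving_swap
  have hS2 : MeasurePreserving (Prod.swap : (Sph × (E3 × E3)) → (E3 × E3) × Sph)
      (sphMeasure.prod ((volume : Measure E3).prod volume))
      (((volume : Measure E3).prod volume).prod sphMeasure) := Measure.measurePreserving_swap
  have hchain := (hA.comp hS2).comp (hG.comp (hS1.comp
    (hA.symm (MeasurableEquiv.prodAssoc : (E3 × E3) × Sph ≃ᵐ E3 × E3 × Sph))))
  have hfun : ((⇑(MeasurableEquiv.prodAssoc : (E3 × E3) × Sph ≃ᵐ E3 × E3 × Sph) ∘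
      (Prod.swap : (Sph × (E3 × E3)) → (E3 × E3) × Sph)) ∘
      ((fun q : Sph × (E3 × E3) => (q.1, Lmap κ (q.1 : E3) q.2)) ∘
      ((Prod.swap : ((E3 × E3) × Sph) → Sph × (E3 × E3)) ∘
      ⇑(MeasurableEquiv.prodAssoc : (E3 × E3) × Sph ≃ᵐ E3 × E3 × Sph).symm))) = Phi κ := by
    funext p; rfl
  rwa [hfun] at hchain

lemma Phi_invol (κ : ℝ) : Function.Involutive (Phi κ) := by
  intro p
  obtain ⟨v, w, n⟩ := p
  have hnn : ⟪(n : E3), (n : E3)⟫ = 1 := inner_self_one (norm_coe_sph n)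
  simp only [Phi]
  have hip : ⟪(v - (2 * κ * ⟪v - w, (n : E3)⟫) • (n : E3)) -
      (w + (2 * (1 - κ) * ⟪v - w, (n : E3)⟫) • (n : E3)), (n : E3)⟫ = -⟪v - w, (n : E3)⟫ := by
    simp only [inner_sub_left, inner_add_left, real_inner_smul_left, hnn]
    ring
  rw [hip]
  refine Prod.ext ?_ (Prod.ext ?_ rfl)
  · show (v - (2 * κ * ⟪v - w, (n : E3)⟫) • (n : E3)) -
      (2 * κ * -⟪v - w, (n : E3)⟫) • (n : E3) = v
    module
  · show (w + (2 * (1 - κ) * ⟪v - w, (n : E3)⟫) • (n : E3)) +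
      (2 * (1 - κ) * -⟪v - w, (n : E3)⟫) • (n : E3) = w
    module

/-- `Phi` as a measurable equivalence. -/
def PhiEquiv (κ : ℝ) : (E3 × E3 × Sph) ≃ᵐ (E3 × E3 × Sph) where
  toEquiv := (Phi_invol κ).toPerm
  measurable_toFun := Phi_meas κ
  measurable_invFun := Phi_meas κ



lemma scalar_id (m m1 Θs Θ1 κ X Y P Q : ℝ) (hΘs0 : Θs ≠ 0) (hΘ10 : Θ1 ≠ 0)
    (hrel : m * κ * Θ1 = m1 * (1 - κ) * Θs) :
    -m * (X - 2 * (2 * κ * (P - Q) * P) + (2 * κ * (P - Q)) ^ 2) / (2 * Θs)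
      + (-m1 * (Y + 2 * (2 * (1 - κ) * (P - Q) * Q) + (2 * (1 - κ) * (P - Q)) ^ 2) / (2 * Θ1))
    = -m * X / (2 * Θs) + (-m1 * Y / (2 * Θ1)) := by
  have key : m * κ / Θs = m1 * (1 - κ) / Θ1 := by rw [div_eq_div_iff hΘs0 hΘ10]; exact hrel
  linear_combination (2 * (P - Q) * (P - κ * (P - Q))) * key

lemma pointwise (m m1 Θs Θ1 κ : ℝ) (u1 : E3) (hΘs0 : Θs ≠ 0) (hΘ10 : Θ1 ≠ 0)
    (hrel : m * κ * Θ1 = m1 * (1 - κ) * Θs) (ψ : E3 → ℝ) (v w : E3) (n : Sph) :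
    kmax (v - (2*κ*⟪v - w, (n:E3)⟫) • (n:E3)) (w + (2*(1-κ)*⟪v - w,(n:E3)⟫) • (n:E3)) n *
      maxwellian m Θs u1 (v - (2*κ*⟪v - w,(n:E3)⟫) • (n:E3)) *
      maxwellian m1 Θ1 u1 (w + (2*(1-κ)*⟪v - w,(n:E3)⟫) • (n:E3)) *
      (ψ (vstar κ (v - (2*κ*⟪v - w,(n:E3)⟫) • (n:E3))
            (w + (2*(1-κ)*⟪v - w,(n:E3)⟫) • (n:E3)) n)
        - ψ (v - (2*κ*⟪v - w,(n:E3)⟫) • (n:E3))) =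
    -(kmax v w n * maxwellian m Θs u1 v * maxwellian m1 Θ1 u1 w *
      (ψ (vstar κ v w n) - ψ v)) := by
  have hn : ‖(n:E3)‖ = 1 := norm_coe_sph n
  have hnn : ⟪(n:E3),(n:E3)⟫ = 1 := inner_self_one hn
  have hd : (v - (2*κ*⟪v - w, (n:E3)⟫) • (n:E3)) - (w + (2*(1-κ)*⟪v - w, (n:E3)⟫) • (n:E3))
      = (v - w) - (2*⟪v - w, (n:E3)⟫) • (n:E3) := by module
  have hip : ⟪(v - w) - (2*⟪v - w, (n:E3)⟫) • (n:E3), (n:E3)⟫ = -⟪v - w, (n:E3)⟫ := by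
    rw [inner_sub_left, real_inner_smul_left, hnn]; ring
  have hK : kmax (v - (2*κ*⟪v - w, (n:E3)⟫) • (n:E3))
      (w + (2*(1-κ)*⟪v - w, (n:E3)⟫) • (n:E3)) n = kmax v w n := by
    simp only [kmax]
    rw [hd, refl_norm hn, real_inner_smul_left, real_inner_smul_left, hip, mul_neg, abs_neg]
  have hM : maxwellian m Θs u1 (v - (2*κ*⟪v - w, (n:E3)⟫) • (n:E3)) *
      maxwellian m1 Θ1 u1 (w + (2*(1-κ)*⟪v - w, (n:E3)⟫) • (n:E3))
      = maxwellian m Θs u1 v * maxwellian m1 Θ1 u1 w := by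
    have e1 : (v - (2*κ*⟪v - w, (n:E3)⟫) • (n:E3)) - u1
        = (v - u1) - (2*κ*⟪v - w, (n:E3)⟫) • (n:E3) := by module
    have e2 : (w + (2*(1-κ)*⟪v - w, (n:E3)⟫) • (n:E3)) - u1
        = (w - u1) + (2*(1-κ)*⟪v - w, (n:E3)⟫) • (n:E3) := by module
    have hsPQ : ⟪v - w, (n:E3)⟫ = ⟪v - u1, (n:E3)⟫ - ⟪w - u1, (n:E3)⟫ := by
      simp only [inner_sub_left]; ring
    have hE : -m * ‖(v - (2*κ*⟪v - w, (n:E3)⟫) • (n:E3)) - u1‖^2 / (2*Θs)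
        + (-m1 * ‖(w + (2*(1-κ)*⟪v - w, (n:E3)⟫) • (n:E3)) - u1‖^2 / (2*Θ1))
        = -m * ‖v - u1‖^2 / (2*Θs) + (-m1 * ‖w - u1‖^2 / (2*Θ1)) := by
      rw [e1, e2, norm_sub_sq_real, norm_add_sq_real, real_inner_smul_right,
        real_inner_smul_right, norm_smul, norm_smul, hn, mul_one, mul_one]
      simp only [Real.norm_eq_abs, sq_abs]
      rw [hsPQ]
      exact scalar_id m m1 Θs Θ1 κ _ _ _ _ hΘs0 hΘ10 hrel
    simp only [maxwellian]
    have h2 : Real.exp (-m * ‖(v - (2*κ*⟪v - w, (n:E3)⟫) • (n:E3)) - u1‖^2 / (2*Θs)) *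
        Real.exp (-m1 * ‖(w + (2*(1-κ)*⟪v - w, (n:E3)⟫) • (n:E3)) - u1‖^2 / (2*Θ1))
        = Real.exp (-m * ‖v - u1‖^2 / (2*Θs)) * Real.exp (-m1 * ‖w - u1‖^2 / (2*Θ1)) := by
      rw [← Real.exp_add, ← Real.exp_add, hE]
    linear_combination ((m/(2*π*Θs))^((3:ℝ)/2) * (m1/(2*π*Θ1))^((3:ℝ)/2)) * h2
  simp only [vstar]
  rw [hd, hip]
  have hV : (v - (2*κ*⟪v - w, (n:E3)⟫) • (n:E3)) - (2*κ*(-⟪v - w, (n:E3)⟫)) • (n:E3) = v := by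
    module
  rw [hV, hK]
  linear_combination (kmax v w n * (ψ v - ψ (v - (2*κ*⟪v - w, (n:E3)⟫) • (n:E3)))) * hM

end MaxEqAux

open MaxEqAux in
/-- The Maxwellian `M` with temperature `Θ#` is an equilibrium of the linear
inelastic Boltzmann operator with Maxwell-molecules kernel, in weak form. -/
theorem maxwellian_equilibrium_maxwell_molecules
    (m m1 e Θ1 : ℝ) (u1 : E3)
    (hm : 0 < m) (hm1 : 0 < m1) (he : e ∈ Set.Ioo (0 : ℝ) 1) (hΘ1 : 0 < Θ1)
    (α β κ Θs : ℝ)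
    (hα : α = m1 / (m + m1)) (hβ : β = (1 - e) / 2) (hκ : κ = α * (1 - β))
    (hΘs : Θs = (1 - α) * (1 - β) * Θ1 / (1 - α * (1 - β)))
    (ψ : E3 → ℝ) (hψ : Measurable ψ) (hψb : ∃ C : ℝ, ∀ v : E3, |ψ v| ≤ C) :
    ∫ p : E3 × E3 × Sph,
        kmax p.1 p.2.1 p.2.2 * maxwellian m Θs u1 p.1 * maxwellian m1 Θ1 u1 p.2.1 *
          (ψ (vstar κ p.1 p.2.1 p.2.2) - ψ p.1) ∂colProd = 0 := by
  obtain ⟨he0, he1⟩ := he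
  have hmm1 : (0:ℝ) < m + m1 := by linarith
  have hα0 : 0 < α := by rw [hα]; positivity
  have hα1 : α < 1 := by rw [hα]; rw [div_lt_one hmm1]; linarith
  have hβ0 : 0 < 1 - β := by rw [hβ]; linarith
  have hβ1 : 1 - β < 1 := by rw [hβ]; linarith
  have hκ1 : 0 < 1 - κ := by rw [hκ]; nlinarith
  have hΘs0 : (0:ℝ) < Θs := by
    rw [hΘs, hκ] at *
    have h1 : 0 < 1 - α := by linarith
    positivity
  have hrel : m * κ * Θ1 = m1 * (1 - κ) * Θs := by
    have h2 : m1 * (1 - κ) * Θs = m1 * ((1 - α) * (1 - β) * Θ1) := by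
      rw [hΘs, hκ]
      have : (1:ℝ) - α * (1 - β) ≠ 0 := by rw [hκ] at hκ1; linarith
      field_simp
    rw [h2, hκ, hα]
    have h3 : (1:ℝ) - m1 / (m + m1) = m / (m + m1) := by field_simp; ring
    rw [h3]
    field_simp
  set F : E3 × E3 × Sph → ℝ := fun p =>
    kmax p.1 p.2.1 p.2.2 * maxwellian m Θs u1 p.1 * maxwellian m1 Θ1 u1 p.2.1 *
      (ψ (vstar κ p.1 p.2.1 p.2.2) - ψ p.1) with hF
  have hemb : MeasurableEmbedding (Phi κ) := (PhiEquiv κ).measurableEmbedding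
  have h1 : ∫ p, F (Phi κ p) ∂colProd = ∫ p, F p ∂colProd :=
    (Phi_mp κ).integral_comp hemb F
  have h2 : ∀ p : E3 × E3 × Sph, F (Phi κ p) = -(F p) := by
    rintro ⟨v, w, n⟩
    simpa only [hF, Phi] using
      pointwise m m1 Θs Θ1 κ u1 (ne_of_gt hΘs0) (ne_of_gt hΘ1) hrel ψ v w n
  have h3 : ∫ p, F p ∂colProd = -∫ p, F p ∂colProd := by
    calc ∫ p, F p ∂colProd = ∫ p, F (Phi κ p) ∂colProd := h1.symm
      _ = ∫ p, -(F p) ∂colProd := by simp only [h2]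
      _ = -∫ p, F p ∂colProd := integral_neg _
  linarith
end
end

section
/- Equilibrium identity for hard spheres: for every bounded measurable function ψ : ℝ³ → ℝ, the integral ∫_{ℝ³×ℝ³×S²} |q·n| · M(v) · M₁(w) · (ψ(v⋆) − ψ(v)) dn dw dv equals 0 (the integrand is integrable since M·M₁ has finite first moments). In other words, the Maxwellian M with temperature Θ# is an equilibrium of the linear inelastic Boltzmann operator with hard-spheres kernel, in weak form. -/
open MeasureTheory Metric Real
open scoped RealInnerProductSpace ENNReal

noncomputable section

/-! ### Auxiliary material for the proof -/

instance : Measure.IsAddHaarMeasure (volume : Measure (E3 × E3)) :=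
  Measure.prod.instIsAddHaarMeasure _ _

instance : IsFiniteMeasure sphMeasure := by unfold sphMeasure; infer_instance

/-- The collision transformation `(v, w) ↦ (v - 2κ(q·n)n, w + (2-2κ)(q·n)n)` as a continuous
linear map. -/
def colL (κ : ℝ) (n : E3) : (E3 × E3) →L[ℝ] (E3 × E3) :=
  ((ContinuousLinearMap.fst ℝ E3 E3) -
    (((innerSL ℝ).flip n).comp ((ContinuousLinearMap.fst ℝ E3 E3) -
      (ContinuousLinearMap.snd ℝ E3 E3))).smulRight ((2*κ) • n)).prod
  ((ContinuousLinearMap.snd ℝ E3 E3) +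
    (((innerSL ℝ).flip n).comp ((ContinuousLinearMap.fst ℝ E3 E3) -
      (ContinuousLinearMap.snd ℝ E3 E3))).smulRight ((2-2*κ) • n))

lemma colL_apply (κ : ℝ) (n : E3) (p : E3 × E3) :
    colL κ n p = (p.1 - (2*κ*⟪p.1 - p.2, n⟫) • n, p.2 + ((2-2*κ)*⟪p.1 - p.2, n⟫) • n) := by
  simp only [colL, ContinuousLinearMap.prod_apply, ContinuousLinearMap.coe_sub',
    ContinuousLinearMap.coe_add', Pi.sub_apply, Pi.add_apply,
    ContinuousLinearMap.smulRight_apply, ContinuousLinearMap.coe_comp', Function.comp_apply,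
    ContinuousLinearMap.flip_apply, innerSL_apply_apply, ContinuousLinearMap.coe_fst',
    ContinuousLinearMap.coe_snd', smul_smul]
  rw [Prod.mk.injEq]
  constructor <;> rw [mul_comm]

lemma colL_invol (κ : ℝ) (n : E3) (hn : ⟪n, n⟫ = 1) (p : E3 × E3) :
    colL κ n (colL κ n p) = p := by
  rw [colL_apply, colL_apply]
  have h : ⟪p.1 - (2*κ*⟪p.1 - p.2, n⟫) • n - (p.2 + ((2-2*κ)*⟪p.1 - p.2, n⟫) • n), n⟫
      = - ⟪p.1 - p.2, n⟫ := by
    rw [inner_sub_left, inner_sub_left, inner_add_left, real_inner_smul_left,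
      real_inner_smul_left, hn, inner_sub_left]
    ring
  rw [h]
  set z := ⟪p.1 - p.2, n⟫
  rw [Prod.mk.injEq]
  constructor <;> module

lemma colL_map_volume (κ : ℝ) (n : E3) (hn : ⟪n, n⟫ = 1) :
    Measure.map (colL κ n) (volume : Measure (E3 × E3)) = volume := by
  have hcomp : ((colL κ n).toLinearMap).comp ((colL κ n).toLinearMap) = LinearMap.id :=
    LinearMap.ext (colL_invol κ n hn)
  have hdet : LinearMap.det ((colL κ n).toLinearMap) *
      LinearMap.det ((colL κ n).toLinearMap) = 1 := by
    rw [← LinearMap.det_comp, hcomp, LinearMap.det_id]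
  have habs : |(LinearMap.det ((colL κ n).toLinearMap))⁻¹| = 1 := by
    rcases mul_self_eq_one_iff.1 hdet with h | h <;> rw [h] <;> norm_num
  have hne : LinearMap.det ((colL κ n).toLinearMap) ≠ 0 := by
    intro h; rw [h] at hdet; norm_num at hdet
  have := Measure.map_linearMap_addHaar_eq_smul_addHaar (volume : Measure (E3 × E3)) hne
  rw [show ⇑(colL κ n) = ⇑((colL κ n).toLinearMap) from rfl, this, habs]
  simp

/-- The collision involution on the whole space `ℝ³ × ℝ³ × S²`. -/
def colΨ (κ : ℝ) : E3 × E3 × Sph → E3 × E3 × Sph := fun p =>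
  ((colL κ (p.2.2 : E3) (p.1, p.2.1)).1, (colL κ (p.2.2 : E3) (p.1, p.2.1)).2, p.2.2)

lemma sph_inner_one (n : Sph) : ⟪(n : E3), (n : E3)⟫ = 1 := by
  have h : ‖(n : E3)‖ = 1 := norm_eq_of_mem_sphere n
  rw [real_inner_self_eq_norm_sq, h]; norm_num

lemma colΨ_invol (κ : ℝ) (p : E3 × E3 × Sph) : colΨ κ (colΨ κ p) = p := by
  have h := colL_invol κ (p.2.2 : E3) (sph_inner_one p.2.2) (p.1, p.2.1)
  simp only [colΨ, Prod.mk.eta, h]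

lemma colΨ_continuous (κ : ℝ) : Continuous (colΨ κ) := by
  have hg : Continuous fun q : Sph × (E3 × E3) => colL κ (q.1 : E3) q.2 := by
    simp only [colL_apply]
    have hn : Continuous fun q : Sph × (E3 × E3) => (q.1 : E3) :=
      continuous_subtype_val.comp continuous_fst
    have hin : Continuous fun q : Sph × (E3 × E3) => (⟪q.2.1 - q.2.2, (q.1 : E3)⟫ : ℝ) :=
      Continuous.inner ((continuous_fst.comp continuous_snd).sub
        (continuous_snd.comp continuous_snd)) hn
    exact (((continuous_fst.comp continuous_snd).sub
        (((continuous_const.mul hin)).smul hn)).prodMk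
      (((continuous_snd.comp continuous_snd)).add
        (((continuous_const.mul hin)).smul hn)))
  have hq : Continuous fun p : E3 × E3 × Sph => ((p.2.2, (p.1, p.2.1)) : Sph × (E3 × E3)) :=
    (continuous_snd.comp continuous_snd).prodMk
      (continuous_fst.prodMk (continuous_fst.comp continuous_snd))
  have := hg.comp hq
  exact ((continuous_fst.comp this).prodMk
    ((continuous_snd.comp this).prodMk (continuous_snd.comp continuous_snd)))

/-- The collision involution as a measurable equivalence. -/
def colΨequiv (κ : ℝ) : (E3 × E3 × Sph) ≃ᵐ (E3 × E3 × Sph) where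
  toFun := colΨ κ
  invFun := colΨ κ
  left_inv := colΨ_invol κ
  right_inv := colΨ_invol κ
  measurable_toFun := (colΨ_continuous κ).measurable
  measurable_invFun := (colΨ_continuous κ).measurable

lemma colΨ_measurePreserving (κ : ℝ) : MeasurePreserving (colΨ κ) colProd colProd := by
  set μ := (volume : Measure E3)
  set σ := sphMeasure
  have hmeas : Measurable (Function.uncurry fun (n : Sph) (p : E3 × E3) =>
      colL κ (n : E3) p) := by
    apply Continuous.measurable
    have hn : Continuous fun q : Sph × (E3 × E3) => (q.1 : E3) :=
      continuous_subtype_val.comp continuous_fst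
    have hin : Continuous fun q : Sph × (E3 × E3) => (⟪q.2.1 - q.2.2, (q.1 : E3)⟫ : ℝ) :=
      Continuous.inner ((continuous_fst.comp continuous_snd).sub
        (continuous_snd.comp continuous_snd)) hn
    have : Continuous fun q : Sph × (E3 × E3) => colL κ (q.1 : E3) q.2 := by
      simp only [colL_apply]
      exact (((continuous_fst.comp continuous_snd).sub
          (((continuous_const.mul hin)).smul hn)).prodMk
        (((continuous_snd.comp continuous_snd)).add
          (((continuous_const.mul hin)).smul hn)))
    exact this
  have g5 : MeasurePreserving (fun q : Sph × (E3 × E3) => (q.1, colL κ (q.1 : E3) q.2))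
      (σ.prod (μ.prod μ)) (σ.prod (μ.prod μ)) :=
    (MeasurePreserving.id σ).skew_product hmeas
      (Filter.Eventually.of_forall fun n => by
        rw [← Measure.volume_eq_prod]; exact colL_map_volume κ n (sph_inner_one n))
  have g1 : MeasurePreserving (Prod.map (id : E3 → E3) (Prod.swap : E3 × Sph → Sph × E3))
      (μ.prod (μ.prod σ)) (μ.prod (σ.prod μ)) :=
    (MeasurePreserving.id μ).prod Measure.measurePreserving_swap
  have g2 : MeasurePreserving (MeasurableEquiv.prodAssoc.symm : E3 × Sph × E3 ≃ᵐ _)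
      (μ.prod (σ.prod μ)) ((μ.prod σ).prod μ) :=
    (measurePreserving_prodAssoc μ σ μ).symm _
  have g3 : MeasurePreserving (Prod.map (Prod.swap : E3 × Sph → Sph × E3) (id : E3 → E3))
      ((μ.prod σ).prod μ) ((σ.prod μ).prod μ) :=
    Measure.measurePreserving_swap.prod (MeasurePreserving.id μ)
  have g4 : MeasurePreserving (MeasurableEquiv.prodAssoc : (Sph × E3) × E3 ≃ᵐ _)
      ((σ.prod μ).prod μ) (σ.prod (μ.prod μ)) :=
    measurePreserving_prodAssoc σ μ μ
  have g4' : MeasurePreserving (MeasurableEquiv.prodAssoc.symm : Sph × E3 × E3 ≃ᵐ _)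
      (σ.prod (μ.prod μ)) ((σ.prod μ).prod μ) := (measurePreserving_prodAssoc σ μ μ).symm _
  have g3' : MeasurePreserving (Prod.map (Prod.swap : Sph × E3 → E3 × Sph) (id : E3 → E3))
      ((σ.prod μ).prod μ) ((μ.prod σ).prod μ) :=
    Measure.measurePreserving_swap.prod (MeasurePreserving.id μ)
  have g2' : MeasurePreserving (MeasurableEquiv.prodAssoc : (E3 × Sph) × E3 ≃ᵐ _)
      ((μ.prod σ).prod μ) (μ.prod (σ.prod μ)) := measurePreserving_prodAssoc μ σ μ
  have g1' : MeasurePreserving (Prod.map (id : E3 → E3) (Prod.swap : Sph × E3 → E3 × Sph))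
      (μ.prod (σ.prod μ)) (μ.prod (μ.prod σ)) :=
    (MeasurePreserving.id μ).prod Measure.measurePreserving_swap
  have total := g1'.comp (g2'.comp (g3'.comp (g4'.comp (g5.comp (g4.comp (g3.comp
    (g2.comp g1)))))))
  have heq : (Prod.map (id : E3 → E3) (Prod.swap : Sph × E3 → E3 × Sph) ∘
      (⇑(MeasurableEquiv.prodAssoc : (E3 × Sph) × E3 ≃ᵐ _) ∘
      (Prod.map (Prod.swap : Sph × E3 → E3 × Sph) (id : E3 → E3) ∘
      (⇑(MeasurableEquiv.prodAssoc.symm : Sph × E3 × E3 ≃ᵐ _) ∘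
      ((fun q : Sph × (E3 × E3) => (q.1, colL κ (q.1 : E3) q.2)) ∘
      (⇑(MeasurableEquiv.prodAssoc : (Sph × E3) × E3 ≃ᵐ _) ∘
      (Prod.map (Prod.swap : E3 × Sph → Sph × E3) (id : E3 → E3) ∘
      (⇑(MeasurableEquiv.prodAssoc.symm : E3 × Sph × E3 ≃ᵐ _) ∘
      Prod.map (id : E3 → E3) (Prod.swap : E3 × Sph → Sph × E3))))))))) = colΨ κ := by
    funext p
    simp [colΨ, MeasurableEquiv.prodAssoc, Prod.map, Function.comp]
  rw [heq] at total
  exact total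

lemma maxw_prod (m m1 Θs Θ1 κ : ℝ) (hΘs : Θs ≠ 0) (hΘ1 : Θ1 ≠ 0)
    (key : m * κ * Θ1 = m1 * (1 - κ) * Θs) (u1 v w N : E3) (hN : ‖N‖ = 1) :
    maxwellian m Θs u1 (v - (2*κ*⟪v - w, N⟫) • N) *
      maxwellian m1 Θ1 u1 (w + ((2-2*κ)*⟪v - w, N⟫) • N) =
    maxwellian m Θs u1 v * maxwellian m1 Θ1 u1 w := by
  have hz : ⟪v - w, N⟫ = ⟪v - u1, N⟫ - ⟪w - u1, N⟫ := by
    rw [← inner_sub_left]; congr 1; abel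
  have hv : v - (2*κ*⟪v - w, N⟫) • N - u1 = (v - u1) - (2*κ*⟪v - w, N⟫) • N := by abel
  have hw : w + ((2-2*κ)*⟪v - w, N⟫) • N - u1 = (w - u1) + ((2-2*κ)*⟪v - w, N⟫) • N := by abel
  have hsq : ∀ c : ℝ, ‖c • N‖ ^ 2 = c ^ 2 := by
    intro c; rw [norm_smul, hN]; simp [sq_abs]
  unfold maxwellian
  rw [hv, hw, mul_mul_mul_comm]
  conv_rhs => rw [mul_mul_mul_comm]
  rw [← Real.exp_add, ← Real.exp_add]
  congr 2
  rw [norm_sub_sq_real, norm_add_sq_real, hsq, hsq, real_inner_smul_right, real_inner_smul_right,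
    hz]
  set x := ⟪v - u1, N⟫
  set y := ⟪w - u1, N⟫
  field_simp
  linear_combination (4*((1-κ)*x^2 + (2*κ-1)*x*y - κ*y^2)) * key

/-- The Maxwellian `M` with temperature `Θ#` is an equilibrium of the linear
inelastic Boltzmann operator with hard-spheres kernel, in weak form. -/
theorem maxwellian_equilibrium_hard_spheres
    (m m1 e Θ1 : ℝ) (u1 : E3)
    (hm : 0 < m) (hm1 : 0 < m1) (he : e ∈ Set.Ioo (0 : ℝ) 1) (hΘ1 : 0 < Θ1)
    (α β κ Θs : ℝ)
    (hα : α = m1 / (m + m1)) (hβ : β = (1 - e) / 2) (hκ : κ = α * (1 - β))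
    (hΘs : Θs = (1 - α) * (1 - β) * Θ1 / (1 - α * (1 - β)))
    (ψ : E3 → ℝ) (hψ : Measurable ψ) (hψb : ∃ C : ℝ, ∀ v : E3, |ψ v| ≤ C) :
    ∫ p : E3 × E3 × Sph,
        khs p.1 p.2.1 p.2.2 * maxwellian m Θs u1 p.1 * maxwellian m1 Θ1 u1 p.2.1 *
          (ψ (vstar κ p.1 p.2.1 p.2.2) - ψ p.1) ∂colProd = 0 := by
  obtain ⟨he0, he1⟩ := he
  have hmm1 : 0 < m + m1 := by linarith
  have hα0 : 0 < α := by rw [hα]; positivity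
  have hα1 : α < 1 := by rw [hα]; rw [div_lt_one hmm1]; linarith
  have hβ0 : 0 < β := by rw [hβ]; linarith
  have hβ1 : β < 1 := by rw [hβ]; linarith
  have hκ0 : 0 < κ := by rw [hκ]; nlinarith
  have hκ1 : κ < 1 := by
    rw [hκ]
    nlinarith
  have h1κ : 0 < 1 - κ := by linarith
  have hα1' : 0 < 1 - α := by linarith
  have hβ1' : 0 < 1 - β := by linarith
  have hΘs0 : 0 < Θs := by
    rw [hΘs, ← hκ]
    exact div_pos (mul_pos (mul_pos hα1' hβ1') hΘ1) h1κ
  have hΘse : Θs * (1 - κ) = (1 - α) * (1 - β) * Θ1 := by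
    rw [hΘs, ← hκ, div_mul_cancel₀ _ (ne_of_gt h1κ)]
  have hmα : m * α = m1 * (1 - α) := by
    rw [hα]; field_simp; ring
  have key : m * κ * Θ1 = m1 * (1 - κ) * Θs := by
    linear_combination ((1-β)*Θ1)*hmα - m1*hΘse + m*Θ1*hκ
  -- the integrand
  set F : E3 × E3 × Sph → ℝ := fun p =>
    khs p.1 p.2.1 p.2.2 * maxwellian m Θs u1 p.1 * maxwellian m1 Θ1 u1 p.2.1 *
      (ψ (vstar κ p.1 p.2.1 p.2.2) - ψ p.1) with hF
  -- pointwise anti-invariance under the collision involution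
  have hanti : ∀ p : E3 × E3 × Sph, F (colΨ κ p) = - F p := by
    rintro ⟨v, w, n⟩
    set N : E3 := (n : E3) with hNdef
    have hNn : ⟪N, N⟫ = 1 := sph_inner_one n
    have hN1 : ‖N‖ = 1 := norm_eq_of_mem_sphere n
    set z : ℝ := ⟪v - w, N⟫ with hzdef
    set v' : E3 := v - (2*κ*z) • N with hv'def
    set w' : E3 := w + ((2-2*κ)*z) • N with hw'def
    have hΨp : colΨ κ (v, w, n) = (v', w', n) := by
      simp only [colΨ, colL_apply]
      rfl
    have hin : ⟪v' - w', N⟫ = -z := by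
      rw [hv'def, hw'def, hzdef, inner_sub_left, inner_sub_left, inner_add_left,
        real_inner_smul_left, real_inner_smul_left, hNn, inner_sub_left]
      ring
    have hkhs : khs v' w' n = khs v w n := by
      unfold khs
      rw [← hNdef, hin, abs_neg]
    have hvstar1 : vstar κ v' w' n = v := by
      unfold vstar
      rw [← hNdef, hin, hv'def]
      module
    have hvstar2 : vstar κ v w n = v' := rfl
    have hmaxw : maxwellian m Θs u1 v' * maxwellian m1 Θ1 u1 w' =
        maxwellian m Θs u1 v * maxwellian m1 Θ1 u1 w :=
      maxw_prod m m1 Θs Θ1 κ (ne_of_gt hΘs0) (ne_of_gt hΘ1) key u1 v w N hN1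
    rw [hF]
    simp only [hΨp]
    rw [hkhs, hvstar1, hvstar2]
    calc khs v w n * maxwellian m Θs u1 v' * maxwellian m1 Θ1 u1 w' * (ψ v - ψ v')
        = khs v w n * (maxwellian m Θs u1 v' * maxwellian m1 Θ1 u1 w') * (ψ v - ψ v') := by
          ring
      _ = khs v w n * (maxwellian m Θs u1 v * maxwellian m1 Θ1 u1 w) * (ψ v - ψ v') := by
          rw [hmaxw]
      _ = -(khs v w n * maxwellian m Θs u1 v * maxwellian m1 Θ1 u1 w * (ψ v' - ψ v)) := by
          ring
  -- measure preservation
  have hmp : MeasurePreserving (⇑(colΨequiv κ)) colProd colProd := colΨ_measurePreserving κ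
  have hint : ∫ p, F (colΨequiv κ p) ∂colProd = ∫ p, F p ∂colProd :=
    hmp.integral_comp' F
  have : ∫ p, F p ∂colProd = - ∫ p, F p ∂colProd := by
    conv_lhs => rw [← hint]
    rw [show (fun p => F (colΨequiv κ p)) = fun p => - F p from funext fun p => hanti p]
    exact integral_neg F
  linarith [this]
end
end

section
/- Planar Gaussian convolution cut-off lemma with quantitative radius: let a = m₁/(2Θ₁) and κ ∈ (0,1). For every ρ₀ > 0 there exists ρ₁ > 0 such that for all v̄ ∈ ℝ² and all ξ ∈ [0, ρ₀/(2κ)], ∫_{{w̄ ∈ ℝ² : |w̄−v̄| ≤ ρ₁}} exp(−a|w̄|²)/√(|v̄−w̄|² + ξ²) dw̄ ≤ (1/2) ∫_{ℝ²} exp(−a|w̄|²)/√(|v̄−w̄|² + ξ²) dw̄. Moreover, setting η = √(2Θ₁/m₁)·r₀ where r₀ is the unique positive real with (2/√π)∫₀^{r₀} e^{−t²} dt = 1/2, whenever 0 < ρ₀ < 2κη the radius ρ₁ can be chosen with ρ₁ ≥ √(η² − ρ₀²/(4κ²)). -/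
open MeasureTheory Real

noncomputable section

/-- `ℝ²` as a Euclidean space. -/
abbrev E2 := EuclideanSpace ℝ (Fin 2)

open Set
open scoped ENNReal

namespace PGC





theorem lintegral_polar (f : ℝ × ℝ → ℝ≥0∞) :
    ∫⁻ p in polarCoord.target, ENNReal.ofReal p.1 * f (polarCoord.symm p) = ∫⁻ p, f p := by
  symm
  calc ∫⁻ p, f p = ∫⁻ p in polarCoord.source, f p := by
        rw [← setLIntegral_univ]
        exact (setLIntegral_congr polarCoord_source_ae_eq_univ.symm)
    _ = ∫⁻ p in polarCoord.symm '' polarCoord.target, f p := by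
        rw [polarCoord.symm_image_target_eq_source]
    _ = ∫⁻ p in polarCoord.target,
          ENNReal.ofReal |(LinearMap.toContinuousLinearMap (Matrix.toLin (Module.Basis.finTwoProd ℝ)
            (Module.Basis.finTwoProd ℝ)
            !![Real.cos p.2, -p.1 * Real.sin p.2; Real.sin p.2, p.1 * Real.cos p.2])).det|
            * f (polarCoord.symm p) := by
        refine lintegral_image_eq_lintegral_abs_det_fderiv_mul volume
          (polarCoord.open_target.measurableSet) (fun p _ =>
            (hasFDerivAt_polarCoord_symm p).hasFDerivWithinAt) ?_ f
        have := polarCoord.symm.injOn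
        rwa [polarCoord.symm_source] at this
    _ = ∫⁻ p in polarCoord.target, ENNReal.ofReal p.1 * f (polarCoord.symm p) := by
        refine setLIntegral_congr_fun polarCoord.open_target.measurableSet
          (fun p hp => ?_)
        congr 1
        congr 1
        have hdet : (LinearMap.toContinuousLinearMap (Matrix.toLin (Module.Basis.finTwoProd ℝ)
            (Module.Basis.finTwoProd ℝ)
            !![Real.cos p.2, -p.1 * Real.sin p.2; Real.sin p.2, p.1 * Real.cos p.2])).det
            = p.1 := by
          conv_rhs => rw [← one_mul p.1, ← cos_sq_add_sin_sq p.2]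
          simp only [neg_mul, LinearMap.det_toContinuousLinearMap, LinearMap.det_toLin,
            Matrix.det_fin_two_of, sub_neg_eq_add]
          ring
        rw [hdet, abs_of_pos hp.1]

theorem lintegral_cpolar (f : ℂ → ℝ≥0∞) :
    ∫⁻ p in polarCoord.target, ENNReal.ofReal p.1 * f (Complex.polarCoord.symm p) = ∫⁻ z, f z := by
  rw [← (Complex.volume_preserving_equiv_real_prod.symm).lintegral_comp_emb
    Complex.measurableEquivRealProd.symm.measurableEmbedding, ← lintegral_polar]
  rfl






variable (a ξ : ℝ) (v : ℂ)

def G (u : ℂ) : ℝ≥0∞ := ENNReal.ofReal (Real.exp (-a * ‖v + u‖^2) / Real.sqrt (‖u‖^2 + ξ^2))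

def H (r : ℝ) : ℝ≥0∞ :=
  ∫⁻ θ in Ioo (-π) π,
    ENNReal.ofReal (Real.exp (-(2*a*r) * (v.re * Real.cos θ + v.im * Real.sin θ)))

def c (r : ℝ) : ℝ≥0∞ :=
  ENNReal.ofReal (Real.exp (-a * ‖v‖^2))
    * ENNReal.ofReal (r * Real.exp (-a*r^2) / Real.sqrt (r^2+ξ^2))

theorem hGm : Measurable (G a ξ v) := by
  unfold G
  apply Measurable.ennreal_ofReal
  apply Measurable.div <;> fun_prop

theorem hnorm_expand (r θ : ℝ) :
    ‖v + Complex.polarCoord.symm (r, θ)‖^2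
      = ‖v‖^2 + r^2 + 2*r*(v.re * Real.cos θ + v.im * Real.sin θ) := by
  rw [Complex.polarCoord_symm_apply]
  simp only [Complex.sq_norm, Complex.normSq_apply]
  simp only [Complex.add_re, Complex.add_im, Complex.mul_re, Complex.mul_im, Complex.ofReal_re,
    Complex.ofReal_im, Complex.add_re, Complex.I_re, Complex.I_im, Complex.mul_re]
  push_cast
  ring_nf
  nlinarith [sin_sq_add_cos_sq θ]

theorem radial (s : Set ℝ) (hs : MeasurableSet s) (hss : s ⊆ Ioi 0) :
    ∫⁻ u in {u : ℂ | ‖u‖ ∈ s}, G a ξ v u = ∫⁻ r in s, c a ξ v r * H a v r := by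
  have hSm : MeasurableSet {u : ℂ | ‖u‖ ∈ s} := measurable_norm hs
  calc ∫⁻ u in {u : ℂ | ‖u‖ ∈ s}, G a ξ v u
      = ∫⁻ u, Set.indicator {u : ℂ | ‖u‖ ∈ s} (G a ξ v) u := (lintegral_indicator hSm _).symm
    _ = ∫⁻ p in polarCoord.target,
          ENNReal.ofReal p.1 * Set.indicator {u : ℂ | ‖u‖ ∈ s} (G a ξ v)
            (Complex.polarCoord.symm p) := (lintegral_cpolar _).symm
    _ = ∫⁻ p in polarCoord.target,
          Set.indicator {p : ℝ × ℝ | p.1 ∈ s}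
            (fun p => ENNReal.ofReal p.1 * G a ξ v (Complex.polarCoord.symm p)) p := by
        refine setLIntegral_congr_fun polarCoord.open_target.measurableSet
          (fun p hp => ?_)
        have habs : ‖Complex.polarCoord.symm p‖ = p.1 := by
          rw [Complex.norm_polarCoord_symm, abs_of_pos hp.1]
        have hmem : Complex.polarCoord.symm p ∈ {u : ℂ | ‖u‖ ∈ s} ↔ p.1 ∈ s := by
          simp only [Set.mem_setOf_eq, habs]
        by_cases h : p.1 ∈ s
        · rw [Set.indicator_of_mem (hmem.mpr h), Set.indicator_of_mem (by exact h)]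
        · rw [Set.indicator_of_notMem (fun hc => h (hmem.mp hc)),
            Set.indicator_of_notMem (by exact h), mul_zero]
    _ = ∫⁻ r in Ioi (0:ℝ), ∫⁻ θ in Ioo (-π) π,
          Set.indicator {p : ℝ × ℝ | p.1 ∈ s}
            (fun p => ENNReal.ofReal p.1 * G a ξ v (Complex.polarCoord.symm p)) (r, θ) := by
        rw [polarCoord_target, MeasureTheory.Measure.volume_eq_prod, ← Measure.prod_restrict]
        refine lintegral_prod _ ?_
        apply AEMeasurable.indicator ?_ (measurable_fst hs)
        apply Measurable.aemeasurable
        apply Measurable.fun_mul (by fun_prop)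
        refine (hGm a ξ v).comp ?_
        have hc : Continuous fun p : ℝ × ℝ => (Complex.polarCoord.symm p : ℂ) := by
          simp only [Complex.polarCoord_symm_apply]
          fun_prop
        exact hc.measurable
    _ = ∫⁻ r in Ioi (0:ℝ), Set.indicator s
          (fun r => ∫⁻ θ in Ioo (-π) π,
            ENNReal.ofReal r * G a ξ v (Complex.polarCoord.symm (r, θ))) r := by
        refine lintegral_congr fun r => ?_
        by_cases h : r ∈ s
        · rw [Set.indicator_of_mem h]
          refine lintegral_congr fun θ => ?_
          rw [Set.indicator_of_mem (by exact h)]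
        · rw [Set.indicator_of_notMem h]
          have hz : ∀ θ : ℝ, Set.indicator {p : ℝ × ℝ | p.1 ∈ s}
              (fun p => ENNReal.ofReal p.1 * G a ξ v (Complex.polarCoord.symm p)) (r, θ) = 0 :=
            fun θ => Set.indicator_of_notMem (s := {p : ℝ × ℝ | p.1 ∈ s}) (a := (r, θ)) (fun hc => h hc) _
          simp only [hz, lintegral_zero]
    _ = ∫⁻ r in s, ∫⁻ θ in Ioo (-π) π,
          ENNReal.ofReal r * G a ξ v (Complex.polarCoord.symm (r, θ)) := by
        rw [lintegral_indicator hs, Measure.restrict_restrict hs,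
          Set.inter_eq_self_of_subset_left hss]
    _ = ∫⁻ r in s, c a ξ v r * H a v r := by
        refine setLIntegral_congr_fun hs (fun r hr => ?_)
        have hr0 : 0 < r := hss hr
        have habs : ∀ θ : ℝ, ‖Complex.polarCoord.symm (r, θ)‖ = r := fun θ => by
          rw [Complex.norm_polarCoord_symm, abs_of_pos hr0]
        have key : ∀ θ : ℝ, ENNReal.ofReal r * G a ξ v (Complex.polarCoord.symm (r, θ))
            = (ENNReal.ofReal (Real.exp (-a * ‖v‖^2))
                * ENNReal.ofReal (r * Real.exp (-a*r^2) / Real.sqrt (r^2+ξ^2)))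
              * ENNReal.ofReal
                  (Real.exp (-(2*a*r) * (v.re * Real.cos θ + v.im * Real.sin θ))) := by
          intro θ
          unfold G
          rw [habs θ, hnorm_expand]
          rw [← ENNReal.ofReal_mul hr0.le, ← ENNReal.ofReal_mul (by positivity),
            ← ENNReal.ofReal_mul (by positivity)]
          congr 1
          rw [show -a * (‖v‖^2 + r^2 + 2*r*(v.re * Real.cos θ + v.im * Real.sin θ))
              = (-a * ‖v‖^2) + ((-a*r^2) + (-(2*a*r) * (v.re * Real.cos θ + v.im * Real.sin θ)))
              from by ring, Real.exp_add, Real.exp_add]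
          ring
        simp only [key]
        rw [lintegral_const_mul _ (by fun_prop)]
        rfl


def J (c : ℝ) : ℝ := ∫ θ in (-π)..π, Real.exp (c * Real.cos θ)

theorem J_eq (c : ℝ) :
    J c = 2 * ∫ θ in (0:ℝ)..(π/2),
      (Real.exp (c * Real.cos θ) + Real.exp (-c * Real.cos θ)) := by
  have hi : ∀ (d x y : ℝ), IntervalIntegrable (fun θ => Real.exp (d * Real.cos θ)) volume x y :=
    fun d x y => (Real.continuous_exp.comp (continuous_const.mul Real.continuous_cos)).intervalIntegrable x y
  have h1 : ∫ θ in (-π)..(0:ℝ), Real.exp (c * Real.cos θ)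
      = ∫ θ in (0:ℝ)..π, Real.exp (c * Real.cos θ) := by
    have := intervalIntegral.integral_comp_neg (a := (0:ℝ)) (b := π)
      (fun θ => Real.exp (c * Real.cos θ))
    simp only [Real.cos_neg, neg_zero] at this
    rw [← this]
  have h2 : ∫ θ in (π/2:ℝ)..π, Real.exp (c * Real.cos θ)
      = ∫ θ in (0:ℝ)..(π/2), Real.exp (-c * Real.cos θ) := by
    have := intervalIntegral.integral_comp_sub_left (a := (0:ℝ)) (b := π/2)
      (fun θ => Real.exp (c * Real.cos θ)) π
    simp only [Real.cos_pi_sub, sub_zero, mul_neg, neg_mul] at this ⊢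
    rw [show π - π/2 = π/2 by ring] at this
    rw [← this]
  have h3 : ∫ θ in (0:ℝ)..π, Real.exp (c * Real.cos θ)
      = (∫ θ in (0:ℝ)..(π/2), Real.exp (c * Real.cos θ))
        + ∫ θ in (0:ℝ)..(π/2), Real.exp (-c * Real.cos θ) := by
    rw [← h2, intervalIntegral.integral_add_adjacent_intervals (hi c 0 (π/2)) (hi c (π/2) π)]
  have h4 : J c = (∫ θ in (-π)..(0:ℝ), Real.exp (c * Real.cos θ))
      + ∫ θ in (0:ℝ)..π, Real.exp (c * Real.cos θ) := by
    rw [J, ← intervalIntegral.integral_add_adjacent_intervals (hi c (-π) 0) (hi c 0 π)]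
  rw [h4, h1, h3, intervalIntegral.integral_add (hi c 0 (π/2)) (hi (-c) 0 (π/2))]
  ring

theorem J_mono {c₁ c₂ : ℝ} (h : |c₁| ≤ |c₂|) : J c₁ ≤ J c₂ := by
  rw [J_eq, J_eq]
  have key : ∀ θ ∈ Icc (0:ℝ) (π/2),
      Real.exp (c₁ * Real.cos θ) + Real.exp (-c₁ * Real.cos θ)
        ≤ Real.exp (c₂ * Real.cos θ) + Real.exp (-c₂ * Real.cos θ) := by
    intro θ _
    have e1 : ∀ d : ℝ, Real.exp (d * Real.cos θ) + Real.exp (-d * Real.cos θ)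
        = 2 * Real.cosh (d * Real.cos θ) := by
      intro d; rw [Real.cosh_eq]; ring_nf
    rw [e1, e1]
    have : |c₁ * Real.cos θ| ≤ |c₂ * Real.cos θ| := by
      rw [abs_mul, abs_mul]
      exact mul_le_mul_of_nonneg_right h (abs_nonneg _)
    linarith [Real.cosh_le_cosh.mpr this]
  have hpi : (0:ℝ) ≤ π/2 := by positivity
  have hint : ∀ d : ℝ, IntervalIntegrable
      (fun θ => Real.exp (d * Real.cos θ) + Real.exp (-d * Real.cos θ)) volume 0 (π/2) := by
    intro d
    apply Continuous.intervalIntegrable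
    fun_prop
  have := intervalIntegral.integral_mono_on hpi (hint c₁) (hint c₂) key
  linarith

theorem H_mono (ha : 0 ≤ a) {r₁ r₂ : ℝ} (h0 : 0 ≤ r₁) (h12 : r₁ ≤ r₂) :
    H a v r₁ ≤ H a v r₂ := by
  have hHJ : ∀ r : ℝ, H a v r = ENNReal.ofReal (J (-(2*a*r) * ‖v‖)) := by
    intro r
    have hcont : Continuous fun θ : ℝ =>
        Real.exp (-(2*a*r) * (v.re * Real.cos θ + v.im * Real.sin θ)) := by fun_prop
    have hint : IntegrableOn (fun θ : ℝ =>
        Real.exp (-(2*a*r) * (v.re * Real.cos θ + v.im * Real.sin θ))) (Ioo (-π) π) := by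
      exact (hcont.integrableOn_Icc (a := -π) (b := π)).mono_set Ioo_subset_Icc_self
    rw [H, ← ofReal_integral_eq_lintegral_ofReal hint
      (Filter.Eventually.of_forall fun θ => (Real.exp_pos _).le)]
    congr 1
    rcases eq_or_ne v 0 with rfl | hv
    · simp [J]
      linarith [Real.pi_pos]
    · have hxy : ∀ θ : ℝ, v.re * Real.cos θ + v.im * Real.sin θ
          = ‖v‖ * Real.cos (θ - Complex.arg v) := by
        intro θ
        rw [Real.cos_sub]
        have habs0 : ‖v‖ ≠ 0 := by simpa using hv
        have hre : v.re = ‖v‖ * Real.cos (Complex.arg v) := by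
          rw [Complex.cos_arg hv, mul_comm, div_mul_cancel₀ _ habs0]
        have him : v.im = ‖v‖ * Real.sin (Complex.arg v) := by
          rw [Complex.sin_arg, mul_comm, div_mul_cancel₀ _ habs0]
        rw [hre, him]; ring
      simp only [hxy]
      have hIoo : ∫ θ in Ioo (-π) π,
          Real.exp (-(2*a*r) * (‖v‖ * Real.cos (θ - Complex.arg v)))
          = ∫ θ in (-π)..π, Real.exp ((-(2*a*r) * ‖v‖) * Real.cos (θ - Complex.arg v)) := by
        rw [intervalIntegral.integral_of_le (by linarith [Real.pi_pos]),
          MeasureTheory.integral_Ioc_eq_integral_Ioo]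
        congr 1
        ext θ
        ring_nf
      rw [hIoo]
      set C := -(2*a*r) * ‖v‖ with hC
      set α := Complex.arg v with hα
      have hsub := intervalIntegral.integral_comp_sub_right (a := -π) (b := π)
        (fun θ => Real.exp (C * Real.cos θ)) α
      have hper : Function.Periodic (fun θ : ℝ => Real.exp (C * Real.cos θ)) (2*π) :=
        Real.cos_periodic.comp (fun t => Real.exp (C * t))
      have hshift := hper.intervalIntegral_add_eq (-π - α) (-π)
      rw [show -π - α + 2*π = π - α by ring, show -π + 2*π = π by ring] at hshift
      rw [hsub, hshift, J]
  rw [hHJ r₁, hHJ r₂]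
  apply ENNReal.ofReal_le_ofReal
  apply J_mono
  have e : ∀ r : ℝ, 0 ≤ r → |(-(2*a*r) * ‖v‖)| = 2*a*r*‖v‖ := by
    intro r hr
    rw [neg_mul, abs_neg, abs_of_nonneg (by positivity)]
  rw [e r₁ h0, e r₂ (h0.trans h12)]
  have : (0:ℝ) ≤ 2*a*‖v‖ := by positivity
  nlinarith [norm_nonneg v]

theorem lintegral_image_deriv {s : Set ℝ} {f f' : ℝ → ℝ} (hs : MeasurableSet s)
    (hf' : ∀ x ∈ s, HasDerivWithinAt f (f' x) s x) (hf : InjOn f s) (g : ℝ → ℝ≥0∞) :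
    ∫⁻ x in f '' s, g x = ∫⁻ x in s, ENNReal.ofReal |f' x| * g (f x) := by
  rw [lintegral_image_eq_lintegral_abs_det_fderiv_mul volume hs
    (fun x hx => (hf' x hx).hasFDerivWithinAt) hf g]
  simp only [ContinuousLinearMap.det_toSpanSingleton]

theorem hS_deriv (ξ : ℝ) {r : ℝ} (hr : 0 < r) :
    HasDerivAt (fun t : ℝ => Real.sqrt (t^2+ξ^2)) (r / Real.sqrt (r^2+ξ^2)) r := by
  have h0 : r^2+ξ^2 ≠ 0 := by positivity
  have h1 : HasDerivAt (fun t : ℝ => t^2+ξ^2) (2*r) r := by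
    simpa [mul_comm] using (hasDerivAt_pow 2 r).add_const (ξ^2)
  have := (Real.hasDerivAt_sqrt h0).comp r h1
  refine this.congr_deriv ?_
  have hsq : Real.sqrt (r^2+ξ^2) ≠ 0 := by positivity
  field_simp

theorem S_lt_S {ξ r₁ r₂ : ℝ} (h0 : 0 ≤ r₁) (h : r₁ < r₂) :
    Real.sqrt (r₁^2+ξ^2) < Real.sqrt (r₂^2+ξ^2) := by
  apply Real.sqrt_lt_sqrt (by positivity)
  nlinarith

theorem S_injOn (ξ : ℝ) {s : Set ℝ} (hs : s ⊆ Ioi 0) :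
    InjOn (fun t : ℝ => Real.sqrt (t^2+ξ^2)) s := by
  intro x hx y hy hxy
  have hx0 : 0 < x := hs hx
  have hy0 : 0 < y := hs hy
  have h1 : x^2+ξ^2 = y^2+ξ^2 := by
    have := congrArg (fun t : ℝ => t^2) hxy
    simpa [Real.sq_sqrt (by positivity : (0:ℝ) ≤ x^2+ξ^2),
      Real.sq_sqrt (by positivity : (0:ℝ) ≤ y^2+ξ^2)] using this
  have : x^2 = y^2 := by linarith
  calc x = Real.sqrt (x^2) := (Real.sqrt_sq hx0.le).symm
    _ = Real.sqrt (y^2) := by rw [this]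
    _ = y := Real.sqrt_sq hy0.le

theorem S_image_Ioc {ξ ρ : ℝ} (hξ : 0 ≤ ξ) (hρ : 0 < ρ) :
    (fun t : ℝ => Real.sqrt (t^2+ξ^2)) '' Ioc 0 ρ = Ioc ξ (Real.sqrt (ρ^2+ξ^2)) := by
  ext s
  constructor
  · rintro ⟨r, ⟨hr0, hrρ⟩, rfl⟩
    constructor
    · calc ξ = Real.sqrt (ξ^2) := (Real.sqrt_sq hξ).symm
        _ < Real.sqrt (r^2+ξ^2) := Real.sqrt_lt_sqrt (by positivity) (by nlinarith)
    · apply Real.sqrt_le_sqrt; nlinarith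
  · rintro ⟨hs1, hs2⟩
    have hs0 : 0 < s := lt_of_le_of_lt hξ hs1
    have hξs : ξ^2 < s^2 := by nlinarith
    have hsβ : s^2 ≤ ρ^2+ξ^2 := by
      have := Real.sqrt_le_sqrt (le_of_eq (rfl : ρ^2+ξ^2 = ρ^2+ξ^2))
      nlinarith [Real.sq_sqrt (by positivity : (0:ℝ) ≤ ρ^2+ξ^2), hs2, Real.sqrt_nonneg (ρ^2+ξ^2),
        hs0]
    refine ⟨Real.sqrt (s^2-ξ^2), ⟨Real.sqrt_pos.mpr (by linarith), ?_⟩, ?_⟩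
    · rw [show ρ = Real.sqrt (ρ^2) from (Real.sqrt_sq hρ.le).symm]
      apply Real.sqrt_le_sqrt; linarith
    · show Real.sqrt (Real.sqrt (s^2-ξ^2)^2 + ξ^2) = s
      rw [Real.sq_sqrt (by linarith : (0:ℝ) ≤ s^2-ξ^2)]
      rw [show s^2-ξ^2+ξ^2 = s^2 by ring, Real.sqrt_sq hs0.le]

theorem S_image_Ioi {ξ ρ : ℝ} (hξ : 0 ≤ ξ) (hρ : 0 < ρ) :
    (fun t : ℝ => Real.sqrt (t^2+ξ^2)) '' Ioi ρ = Ioi (Real.sqrt (ρ^2+ξ^2)) := by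
  ext s
  constructor
  · rintro ⟨r, hr, rfl⟩
    exact S_lt_S hρ.le hr
  · intro hs
    have hβ0 : 0 < Real.sqrt (ρ^2+ξ^2) := by positivity
    have hs0 : 0 < s := hβ0.trans hs
    have hsβ : ρ^2+ξ^2 < s^2 := by
      have h2 := mul_self_lt_mul_self hβ0.le hs
      rw [Real.mul_self_sqrt (by positivity : (0:ℝ) ≤ ρ^2+ξ^2)] at h2
      nlinarith
    refine ⟨Real.sqrt (s^2-ξ^2), ?_, ?_⟩
    · rw [show ρ = Real.sqrt (ρ^2) from (Real.sqrt_sq hρ.le).symm]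
      exact Real.sqrt_lt_sqrt (by positivity) (by linarith)
    · show Real.sqrt (Real.sqrt (s^2-ξ^2)^2 + ξ^2) = s
      rw [Real.sq_sqrt (by nlinarith : (0:ℝ) ≤ s^2-ξ^2),
        show s^2-ξ^2+ξ^2 = s^2 by ring, Real.sqrt_sq hs0.le]

theorem oneD_subst {a ξ : ℝ} (hξ : 0 ≤ ξ) {s : Set ℝ} (hsm : MeasurableSet s)
    (hss : s ⊆ Ioi 0) :
    ∫⁻ x in (fun t : ℝ => Real.sqrt (t^2+ξ^2)) '' s,
        ENNReal.ofReal (Real.exp (a*ξ^2) * Real.exp (-a*x^2))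
      = ∫⁻ r in s, ENNReal.ofReal (r * Real.exp (-a*r^2) / Real.sqrt (r^2+ξ^2)) := by
  rw [lintegral_image_deriv hsm
    (fun r hr => ((hS_deriv ξ (hss hr)).hasDerivWithinAt)) (S_injOn ξ hss)]
  refine setLIntegral_congr_fun hsm (fun r hr => ?_)
  have hr0 : 0 < r := hss hr
  rw [← ENNReal.ofReal_mul (abs_nonneg _)]
  congr 1
  rw [abs_of_nonneg (by positivity), Real.sq_sqrt (by positivity : (0:ℝ) ≤ r^2+ξ^2)]
  rw [← Real.exp_add]
  rw [show a*ξ^2 + -a*(r^2+ξ^2) = -a*r^2 by ring]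
  ring

section OneD

variable {a : ℝ}

theorem gauss_int (ha : 0 < a) : Integrable (fun s : ℝ => Real.exp (-a*s^2)) := by
  simpa using integrable_exp_neg_mul_sq ha

theorem gauss_nonneg_ae {μ : Measure ℝ} : 0 ≤ᵐ[μ] fun s : ℝ => Real.exp (-a*s^2) :=
  Filter.Eventually.of_forall fun s => (Real.exp_pos _).le

theorem tail_mono (ha : 0 < a) {c d : ℝ} (h : c ≤ d) :
    ∫ s in Ioi d, Real.exp (-a*s^2) ≤ ∫ s in Ioi c, Real.exp (-a*s^2) :=
  setIntegral_mono_set (gauss_int ha).integrableOn gauss_nonneg_ae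
    (Ioi_subset_Ioi h).eventuallyLE

theorem gauss_split (ha : 0 < a) {c d : ℝ} (h : c ≤ d) :
    ∫ s in Ioi c, Real.exp (-a*s^2)
      = (∫ s in c..d, Real.exp (-a*s^2)) + ∫ s in Ioi d, Real.exp (-a*s^2) := by
  rw [intervalIntegral.integral_of_le h, ← setIntegral_union (Ioc_disjoint_Ioi le_rfl)
    measurableSet_Ioi (gauss_int ha).integrableOn (gauss_int ha).integrableOn,
    Ioc_union_Ioi_eq_Ioi h]

theorem eta_half {η r0 : ℝ} (ha : 0 < a) (hη0 : 0 < η) (hr : Real.sqrt a * η = r0)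
    (herf : (∫ t in (0:ℝ)..r0, Real.exp (-t^2)) = Real.sqrt π / 4) :
    (∫ s in (0:ℝ)..η, Real.exp (-a*s^2)) = ∫ s in Ioi η, Real.exp (-a*s^2) := by
  have hsa : (0:ℝ) < Real.sqrt a := Real.sqrt_pos.mpr ha
  have h1 : (∫ s in (0:ℝ)..η, Real.exp (-a*s^2)) = (Real.sqrt a)⁻¹ * (Real.sqrt π / 4) := by
    have hc : ∀ s : ℝ, Real.exp (-a*s^2) = Real.exp (-(Real.sqrt a * s)^2) := by
      intro s
      rw [mul_pow, Real.sq_sqrt ha.le]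
      ring_nf
    simp only [hc]
    rw [intervalIntegral.integral_comp_mul_left (fun t => Real.exp (-t^2)) hsa.ne',
      mul_zero, hr, herf, smul_eq_mul]
  have h2 := gauss_split ha hη0.le (c := 0)
  rw [integral_gaussian_Ioi a] at h2
  have h3 : Real.sqrt (π / a) = Real.sqrt π / Real.sqrt a := Real.sqrt_div Real.pi_pos.le a
  rw [h1]
  rw [h3, h1, div_div, div_eq_mul_inv, mul_inv] at h2
  linear_combination h2

end OneD

theorem front_le_tail_of_le_eta {a ξ β η : ℝ} (ha : 0 < a) (hξ : 0 ≤ ξ) (hξβ : ξ ≤ β)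
    (hβη : β ≤ η)
    (hhalf : (∫ s in (0:ℝ)..η, Real.exp (-a*s^2)) = ∫ s in Ioi η, Real.exp (-a*s^2)) :
    (∫ s in ξ..β, Real.exp (-a*s^2)) ≤ ∫ s in Ioi β, Real.exp (-a*s^2) := by
  calc (∫ s in ξ..β, Real.exp (-a*s^2)) ≤ ∫ s in (0:ℝ)..η, Real.exp (-a*s^2) :=
        intervalIntegral.integral_mono_interval hξ hξβ hβη
          gauss_nonneg_ae (gauss_int ha).intervalIntegrable
    _ = ∫ s in Ioi η, Real.exp (-a*s^2) := hhalf
    _ ≤ ∫ s in Ioi β, Real.exp (-a*s^2) := tail_mono ha hβη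

theorem front_le_tail_small {a ξ ρ M : ℝ} (ha : 0 < a) (hξ0 : 0 ≤ ξ) (hξM : ξ ≤ M)
    (hρ0 : 0 < ρ) (hρ1 : ρ ≤ 1) (hρ2 : ρ ≤ Real.exp (-(a*(M+2)^2))) :
    (∫ s in ξ..Real.sqrt (ρ^2+ξ^2), Real.exp (-a*s^2))
      ≤ ∫ s in Ioi (Real.sqrt (ρ^2+ξ^2)), Real.exp (-a*s^2) := by
  set β := Real.sqrt (ρ^2+ξ^2) with hβ
  have hξβ : ξ ≤ β := by
    nth_rewrite 1 [show ξ = Real.sqrt (ξ^2) from (Real.sqrt_sq hξ0).symm]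
    exact Real.sqrt_le_sqrt (by nlinarith)
  have hβ0 : (0:ℝ) ≤ β := Real.sqrt_nonneg _
  have hβle : β ≤ ξ + ρ := by
    rw [hβ, show ξ + ρ = Real.sqrt ((ξ+ρ)^2) from (Real.sqrt_sq (by positivity)).symm]
    exact Real.sqrt_le_sqrt (by nlinarith)
  have hLHS : (∫ s in ξ..β, Real.exp (-a*s^2)) ≤ β - ξ := by
    calc (∫ s in ξ..β, Real.exp (-a*s^2)) ≤ ∫ _ in ξ..β, (1:ℝ) := by
          apply intervalIntegral.integral_mono_on hξβ
            (gauss_int ha).intervalIntegrable intervalIntegrable_const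
          intro s _
          rw [Real.exp_le_one_iff]
          nlinarith
      _ = β - ξ := by simp
  have hRHS : Real.exp (-(a*(M+2)^2)) ≤ ∫ s in Ioi β, Real.exp (-a*s^2) := by
    have hsplit := gauss_split ha (le_of_lt (by linarith : β < β + 1)) (c := β)
    have htail : (0:ℝ) ≤ ∫ s in Ioi (β+1), Real.exp (-a*s^2) :=
      setIntegral_nonneg measurableSet_Ioi fun s _ => (Real.exp_pos _).le
    have hmid : Real.exp (-(a*(M+2)^2)) ≤ ∫ s in β..(β+1), Real.exp (-a*s^2) := by
      have h5 : ∫ _ in β..(β+1), Real.exp (-(a*(M+2)^2)) ≤ ∫ s in β..(β+1), Real.exp (-a*s^2) := by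
        apply intervalIntegral.integral_mono_on (by linarith)
          intervalIntegrable_const (gauss_int ha).intervalIntegrable
        intro s hs
        apply Real.exp_le_exp.mpr
        have h1 : 0 ≤ s := le_trans hβ0 hs.1
        have h2 : s ≤ M + 2 := by
          have := hs.2
          linarith [hξM, hρ1, hβle]
        have h3 : s^2 ≤ (M+2)^2 := by nlinarith
        nlinarith [mul_le_mul_of_nonneg_left h3 ha.le]
      simpa using h5
    linarith
  linarith

theorem oneD {a ξ ρ : ℝ} (ha : 0 < a) (hξ : 0 ≤ ξ) (hρ : 0 < ρ)
    (hyp : (∫ s in ξ..Real.sqrt (ρ^2+ξ^2), Real.exp (-a*s^2))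
      ≤ ∫ s in Ioi (Real.sqrt (ρ^2+ξ^2)), Real.exp (-a*s^2)) :
    ∫⁻ r in Ioc 0 ρ, ENNReal.ofReal (r * Real.exp (-a*r^2) / Real.sqrt (r^2+ξ^2))
      ≤ ∫⁻ r in Ioi ρ, ENNReal.ofReal (r * Real.exp (-a*r^2) / Real.sqrt (r^2+ξ^2)) := by
  have hβξ : ξ ≤ Real.sqrt (ρ^2+ξ^2) := by
    nth_rewrite 1 [show ξ = Real.sqrt (ξ^2) from (Real.sqrt_sq hξ).symm]
    exact Real.sqrt_le_sqrt (by nlinarith)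
  rw [← oneD_subst (a := a) hξ measurableSet_Ioc (fun x hx => hx.1),
      ← oneD_subst (a := a) hξ measurableSet_Ioi (Ioi_subset_Ioi hρ.le),
      S_image_Ioc hξ hρ, S_image_Ioi hξ hρ]
  have hint : Integrable (fun x : ℝ => Real.exp (a*ξ^2) * Real.exp (-a*x^2)) :=
    (gauss_int ha).const_mul _
  have hnn : ∀ {μ : Measure ℝ}, 0 ≤ᵐ[μ] fun x : ℝ => Real.exp (a*ξ^2) * Real.exp (-a*x^2) :=
    Filter.Eventually.of_forall fun x => by positivity
  rw [← ofReal_integral_eq_lintegral_ofReal hint.integrableOn hnn,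
      ← ofReal_integral_eq_lintegral_ofReal hint.integrableOn hnn]
  apply ENNReal.ofReal_le_ofReal
  rw [integral_const_mul, integral_const_mul]
  apply mul_le_mul_of_nonneg_left ?_ (Real.exp_pos _).le
  rw [← intervalIntegral.integral_of_le hβξ]
  exact hyp

theorem phi_meas (a ξ : ℝ) :
    Measurable fun r : ℝ => ENNReal.ofReal (r * Real.exp (-a*r^2) / Real.sqrt (r^2+ξ^2)) := by
  apply Measurable.ennreal_ofReal
  apply Measurable.div <;> fun_prop

theorem c_unfold (a ξ : ℝ) (v : ℂ) : c a ξ v = fun r =>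
    ENNReal.ofReal (Real.exp (-a * ‖v‖^2))
      * ENNReal.ofReal (r * Real.exp (-a*r^2) / Real.sqrt (r^2+ξ^2)) := rfl

theorem c_meas (a ξ : ℝ) (v : ℂ) : Measurable (c a ξ v) := by
  rw [c_unfold]
  exact (phi_meas a ξ).const_mul _

theorem key_chain {a ξ ρ : ℝ} (ha : 0 < a) (hξ : 0 ≤ ξ) (hρ : 0 < ρ) (v : ℂ)
    (hyp : (∫ s in ξ..Real.sqrt (ρ^2+ξ^2), Real.exp (-a*s^2))
      ≤ ∫ s in Ioi (Real.sqrt (ρ^2+ξ^2)), Real.exp (-a*s^2)) :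
    ∫⁻ r in Ioc 0 ρ, c a ξ v r * H a v r ≤ ∫⁻ r in Ioi ρ, c a ξ v r * H a v r := by
  calc ∫⁻ r in Ioc 0 ρ, c a ξ v r * H a v r
      ≤ ∫⁻ r in Ioc 0 ρ, c a ξ v r * H a v ρ :=
        setLIntegral_mono' measurableSet_Ioc
          (fun r hr => mul_le_mul_right (H_mono a v ha.le hr.1.le hr.2) _)
    _ = (∫⁻ r in Ioc 0 ρ, c a ξ v r) * H a v ρ := lintegral_mul_const _ (c_meas a ξ v)
    _ ≤ (∫⁻ r in Ioi ρ, c a ξ v r) * H a v ρ := by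
        apply mul_le_mul_left
        simp only [c_unfold]
        rw [lintegral_const_mul _ (phi_meas a ξ), lintegral_const_mul _ (phi_meas a ξ)]
        exact mul_le_mul_right (oneD ha hξ hρ hyp) _
    _ = ∫⁻ r in Ioi ρ, c a ξ v r * H a v ρ := (lintegral_mul_const _ (c_meas a ξ v)).symm
    _ ≤ ∫⁻ r in Ioi ρ, c a ξ v r * H a v r :=
        setLIntegral_mono' measurableSet_Ioi
          (fun r hr => mul_le_mul_right (H_mono a v ha.le hρ.le (le_of_lt hr)) _)

theorem total_fin {a ξ : ℝ} (ha : 0 < a) (v : ℂ) :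
    ∫⁻ r in Ioi 0, c a ξ v r * H a v r < ⊤ := by
  have hstep : ∀ r ∈ Ioi (0:ℝ), c a ξ v r * H a v r
      ≤ ENNReal.ofReal (Real.exp (-a*r^2) * (Real.exp (2*a*r*‖v‖) * (2*π))) := by
    intro r hr
    have hr0 : (0:ℝ) < r := hr
    have hc : c a ξ v r ≤ ENNReal.ofReal (Real.exp (-a*r^2)) := by
      rw [c_unfold]
      calc ENNReal.ofReal (Real.exp (-a * ‖v‖^2))
            * ENNReal.ofReal (r * Real.exp (-a*r^2) / Real.sqrt (r^2+ξ^2))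
          ≤ ENNReal.ofReal 1 * ENNReal.ofReal (Real.exp (-a*r^2)) := by
            apply mul_le_mul' (ENNReal.ofReal_le_ofReal ?_) (ENNReal.ofReal_le_ofReal ?_)
            · rw [Real.exp_le_one_iff]
              have := norm_nonneg v
              nlinarith
            · have h2 : (0:ℝ) < Real.sqrt (r^2+ξ^2) := by positivity
              have h1 : r ≤ Real.sqrt (r^2+ξ^2) := by
                nth_rewrite 1 [show r = Real.sqrt (r^2) from (Real.sqrt_sq hr0.le).symm]
                exact Real.sqrt_le_sqrt (by nlinarith)
              rw [mul_comm r, mul_div_assoc]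
              exact mul_le_of_le_one_right (Real.exp_pos _).le ((div_le_one h2).mpr h1)
        _ = ENNReal.ofReal (Real.exp (-a*r^2)) := by simp
    have hH : H a v r ≤ ENNReal.ofReal (Real.exp (2*a*r*‖v‖)) * ENNReal.ofReal (2*π) := by
      have hCS : ∀ θ : ℝ, |v.re * Real.cos θ + v.im * Real.sin θ| ≤ ‖v‖ := by
        intro θ
        have hn2 : ‖v‖^2 = v.re^2 + v.im^2 := by
          rw [Complex.sq_norm, Complex.normSq_apply]; ring
        have h4 : (v.re * Real.cos θ + v.im * Real.sin θ)^2 ≤ ‖v‖^2 := by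
          nlinarith [sin_sq_add_cos_sq θ, sq_nonneg (v.re * Real.sin θ - v.im * Real.cos θ)]
        have h5 := Real.sqrt_le_sqrt h4
        rwa [Real.sqrt_sq_eq_abs, Real.sqrt_sq (norm_nonneg v)] at h5
      calc H a v r ≤ ∫⁻ _ in Ioo (-π) π, ENNReal.ofReal (Real.exp (2*a*r*‖v‖)) := by
            apply setLIntegral_mono' measurableSet_Ioo
            intro θ _
            apply ENNReal.ofReal_le_ofReal
            apply Real.exp_le_exp.mpr
            calc -(2*a*r) * (v.re * Real.cos θ + v.im * Real.sin θ)
                ≤ |-(2*a*r) * (v.re * Real.cos θ + v.im * Real.sin θ)| := le_abs_self _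
              _ = (2*a*r) * |v.re * Real.cos θ + v.im * Real.sin θ| := by
                  rw [abs_mul, abs_neg, abs_of_nonneg (by positivity : (0:ℝ) ≤ 2*a*r)]
              _ ≤ (2*a*r) * ‖v‖ := by
                  exact mul_le_mul_of_nonneg_left (hCS θ) (by positivity)
              _ = 2*a*r*‖v‖ := by ring
        _ = ENNReal.ofReal (Real.exp (2*a*r*‖v‖)) * ENNReal.ofReal (2*π) := by
            rw [setLIntegral_const, Real.volume_Ioo, show π - -π = 2*π by ring]
    calc c a ξ v r * H a v r
        ≤ ENNReal.ofReal (Real.exp (-a*r^2))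
            * (ENNReal.ofReal (Real.exp (2*a*r*‖v‖)) * ENNReal.ofReal (2*π)) :=
          mul_le_mul' hc hH
      _ = ENNReal.ofReal (Real.exp (-a*r^2) * (Real.exp (2*a*r*‖v‖) * (2*π))) := by
          rw [← ENNReal.ofReal_mul (by positivity), ← ENNReal.ofReal_mul (by positivity)]
  have hg : Integrable (fun r : ℝ => Real.exp (-a*r^2) * (Real.exp (2*a*r*‖v‖) * (2*π))) := by
    have h6 : Integrable (fun r : ℝ =>
        (2*π*Real.exp (a*‖v‖^2)) * Real.exp (-a*(r-‖v‖)^2)) :=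
      ((gauss_int ha).comp_sub_right ‖v‖).const_mul _
    have h7 : (fun r : ℝ => (2*π*Real.exp (a*‖v‖^2)) * Real.exp (-a*(r-‖v‖)^2))
        = fun r : ℝ => Real.exp (-a*r^2) * (Real.exp (2*a*r*‖v‖) * (2*π)) := by
      funext r
      rw [mul_assoc (2*π), ← Real.exp_add,
        show (Real.exp (-a*r^2) * (Real.exp (2*a*r*‖v‖) * (2*π)))
          = (Real.exp (-a*r^2) * Real.exp (2*a*r*‖v‖)) * (2*π) by ring, ← Real.exp_add]
      rw [show a*‖v‖^2 + -a*(r-‖v‖)^2 = -a*r^2 + 2*a*r*‖v‖ by ring]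
      ring
    rw [h7] at h6
    exact h6
  calc ∫⁻ r in Ioi 0, c a ξ v r * H a v r
      ≤ ∫⁻ r in Ioi 0,
          ENNReal.ofReal (Real.exp (-a*r^2) * (Real.exp (2*a*r*‖v‖) * (2*π))) :=
        setLIntegral_mono' measurableSet_Ioi hstep
    _ ≤ ∫⁻ r, ENNReal.ofReal (Real.exp (-a*r^2) * (Real.exp (2*a*r*‖v‖) * (2*π))) :=
        setLIntegral_le_lintegral _ _
    _ < ⊤ := hg.lintegral_lt_top

theorem ae_ne_zero : ∀ᵐ u : ℂ, u ≠ 0 := by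
  have h : ({(0:ℂ)}ᶜ : Set ℂ) ∈ ae volume := compl_mem_ae_iff.mpr (measure_singleton 0)
  filter_upwards [h] with u hu
  exact hu

theorem total_eq (a ξ : ℝ) (v : ℂ) :
    ∫⁻ u, G a ξ v u = ∫⁻ r in Ioi 0, c a ξ v r * H a v r := by
  rw [← radial a ξ v (Ioi 0) measurableSet_Ioi (fun x hx => hx), ← setLIntegral_univ]
  apply setLIntegral_congr
  have he : {u : ℂ | ‖u‖ ∈ Ioi 0} = {(0:ℂ)}ᶜ := by
    ext u; simp [norm_pos_iff]
  rw [he]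
  refine (ae_eq_univ.mpr ?_).symm
  rw [compl_compl]
  exact measure_singleton 0

theorem ball_eq (a ξ : ℝ) {ρ : ℝ} (hρ : 0 < ρ) (v : ℂ) :
    ∫⁻ u in {u : ℂ | ‖u‖ ≤ ρ}, G a ξ v u = ∫⁻ r in Ioc 0 ρ, c a ξ v r * H a v r := by
  rw [← radial a ξ v (Ioc 0 ρ) measurableSet_Ioc (fun x hx => hx.1)]
  apply setLIntegral_congr
  rw [Filter.eventuallyEq_set]
  filter_upwards [ae_ne_zero] with u hu
  simp only [Set.mem_setOf_eq, mem_Ioc]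
  exact ⟨fun h => ⟨norm_pos_iff.mpr hu, h⟩, fun h => h.2⟩

theorem f_meas (a ξ : ℝ) (v : ℂ) :
    Measurable fun w : ℂ => Real.exp (-a * ‖w‖^2) / Real.sqrt (‖v - w‖^2 + ξ^2) := by
  apply Measurable.div <;> fun_prop

theorem complex_final {a ξ ρ : ℝ} (ha : 0 < a) (hξ : 0 ≤ ξ) (hρ : 0 < ρ) (v : ℂ)
    (hyp : (∫ s in ξ..Real.sqrt (ρ^2+ξ^2), Real.exp (-a*s^2))
      ≤ ∫ s in Ioi (Real.sqrt (ρ^2+ξ^2)), Real.exp (-a*s^2)) :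
    (∫ w in {w : ℂ | ‖w - v‖ ≤ ρ}, Real.exp (-a * ‖w‖^2) / Real.sqrt (‖v - w‖^2 + ξ^2))
      ≤ (1/2) * ∫ w : ℂ, Real.exp (-a * ‖w‖^2) / Real.sqrt (‖v - w‖^2 + ξ^2) := by
  set f : ℂ → ℝ := fun w => Real.exp (-a * ‖w‖^2) / Real.sqrt (‖v - w‖^2 + ξ^2) with hf
  have hfm : AEStronglyMeasurable f volume := (f_meas a ξ v).aestronglyMeasurable
  have hfnn : ∀ w, 0 ≤ f w := fun w => by positivity
  have mp : MeasurePreserving (fun u : ℂ => v + u) volume volume :=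
    measurePreserving_add_left volume v
  have emb : MeasurableEmbedding (fun u : ℂ => v + u) :=
    (Homeomorph.addLeft v).measurableEmbedding
  have hcomp : ∀ u : ℂ, ENNReal.ofReal (f (v + u)) = G a ξ v u := by
    intro u
    rw [hf]
    simp only [G]
    congr 3
    rw [show v - (v + u) = -u by ring, norm_neg]
  -- ball side
  have hA : ∫ w in {w : ℂ | ‖w - v‖ ≤ ρ}, f w
      = (∫⁻ r in Ioc 0 ρ, c a ξ v r * H a v r).toReal := by
    rw [integral_eq_lintegral_of_nonneg_ae (Filter.Eventually.of_forall hfnn) hfm.restrict]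
    congr 1
    rw [← mp.setLIntegral_comp_preimage_emb emb]
    rw [show (fun u : ℂ => v + u) ⁻¹' {w : ℂ | ‖w - v‖ ≤ ρ} = {u : ℂ | ‖u‖ ≤ ρ} by
      ext u; simp [add_sub_cancel_left]]
    rw [← ball_eq a ξ hρ v]
    apply lintegral_congr
    exact fun u => hcomp u
  have hB : ∫ w : ℂ, f w = (∫⁻ r in Ioi 0, c a ξ v r * H a v r).toReal := by
    rw [integral_eq_lintegral_of_nonneg_ae (Filter.Eventually.of_forall hfnn) hfm]
    congr 1
    rw [← mp.lintegral_comp_emb emb]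
    rw [← total_eq a ξ v]
    apply lintegral_congr
    exact fun u => hcomp u
  rw [hA, hB]
  set A := ∫⁻ r in Ioc 0 ρ, c a ξ v r * H a v r with hA'
  set C := ∫⁻ r in Ioi ρ, c a ξ v r * H a v r with hC'
  have hT : ∫⁻ r in Ioi 0, c a ξ v r * H a v r = A + C := by
    rw [← Ioc_union_Ioi_eq_Ioi hρ.le, lintegral_union measurableSet_Ioi (Ioc_disjoint_Ioi le_rfl)]
  have hAC : A ≤ C := key_chain ha hξ hρ v hyp
  have hfin : A + C < ⊤ := by rw [← hT]; exact total_fin ha v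
  have hCfin : C ≠ ⊤ := fun h => by simp [h] at hfin
  have hAfin : A ≠ ⊤ := fun h => by simp [h] at hfin
  rw [hT, ENNReal.toReal_add hAfin hCfin]
  have := ENNReal.toReal_mono hCfin hAC
  linarith

theorem euclid_final {a ξ ρ : ℝ} (ha : 0 < a) (hξ : 0 ≤ ξ) (hρ : 0 < ρ)
    (v : EuclideanSpace ℝ (Fin 2))
    (hyp : (∫ s in ξ..Real.sqrt (ρ^2+ξ^2), Real.exp (-a*s^2))
      ≤ ∫ s in Ioi (Real.sqrt (ρ^2+ξ^2)), Real.exp (-a*s^2)) :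
    (∫ w in {w : EuclideanSpace ℝ (Fin 2) | ‖w - v‖ ≤ ρ},
        Real.exp (-a * ‖w‖^2) / Real.sqrt (‖v - w‖^2 + ξ^2))
      ≤ (1/2) * ∫ w : EuclideanSpace ℝ (Fin 2),
        Real.exp (-a * ‖w‖^2) / Real.sqrt (‖v - w‖^2 + ξ^2) := by
  set T : ℂ ≃ₗᵢ[ℝ] EuclideanSpace ℝ (Fin 2) := Complex.orthonormalBasisOneI.repr with hT
  have mp : MeasurePreserving T volume volume := T.measurePreserving
  have emb : MeasurableEmbedding T := T.toHomeomorph.measurableEmbedding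
  have hpre : T ⁻¹' {w : EuclideanSpace ℝ (Fin 2) | ‖w - v‖ ≤ ρ}
      = {z : ℂ | ‖z - T.symm v‖ ≤ ρ} := by
    ext z
    simp only [Set.mem_preimage, Set.mem_setOf_eq]
    rw [show T z - v = T (z - T.symm v) by rw [map_sub, T.apply_symm_apply], T.norm_map]
  have hcomp : ∀ z : ℂ, Real.exp (-a * ‖T z‖^2) / Real.sqrt (‖v - T z‖^2 + ξ^2)
      = Real.exp (-a * ‖z‖^2) / Real.sqrt (‖T.symm v - z‖^2 + ξ^2) := by
    intro z
    rw [T.norm_map, show v - T z = T (T.symm v - z) by rw [map_sub, T.apply_symm_apply],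
      T.norm_map]
  have step : (∫ z in T ⁻¹' {w : EuclideanSpace ℝ (Fin 2) | ‖w - v‖ ≤ ρ},
        Real.exp (-a * ‖T z‖^2) / Real.sqrt (‖v - T z‖^2 + ξ^2))
      ≤ (1/2) * ∫ z : ℂ, Real.exp (-a * ‖T z‖^2) / Real.sqrt (‖v - T z‖^2 + ξ^2) := by
    rw [hpre]
    simp only [hcomp]
    exact complex_final ha hξ hρ (T.symm v) hyp
  calc (∫ w in {w : EuclideanSpace ℝ (Fin 2) | ‖w - v‖ ≤ ρ},
        Real.exp (-a * ‖w‖^2) / Real.sqrt (‖v - w‖^2 + ξ^2))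
      = ∫ z in T ⁻¹' {w : EuclideanSpace ℝ (Fin 2) | ‖w - v‖ ≤ ρ},
          Real.exp (-a * ‖T z‖^2) / Real.sqrt (‖v - T z‖^2 + ξ^2) :=
        (mp.setIntegral_preimage_emb emb _ _).symm
    _ ≤ (1/2) * ∫ z : ℂ, Real.exp (-a * ‖T z‖^2) / Real.sqrt (‖v - T z‖^2 + ξ^2) := step
    _ = (1/2) * ∫ w : EuclideanSpace ℝ (Fin 2),
          Real.exp (-a * ‖w‖^2) / Real.sqrt (‖v - w‖^2 + ξ^2) := by
        congr 1
        exact mp.integral_comp emb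
          (fun w : EuclideanSpace ℝ (Fin 2) =>
            Real.exp (-a * ‖w‖^2) / Real.sqrt (‖v - w‖^2 + ξ^2))

end PGC

/-- Planar Gaussian convolution cut-off lemma with quantitative radius:
with `a = m₁/(2Θ₁)` and `κ ∈ (0,1)`, for every `ρ₀ > 0` there exists `ρ₁ > 0` such that for
all `v̄ ∈ ℝ²` and `ξ ∈ [0, ρ₀/(2κ)]`,
`∫_{|w̄-v̄| ≤ ρ₁} e^{-a|w̄|²}/√(|v̄-w̄|²+ξ²) ≤ (1/2) ∫_{ℝ²} e^{-a|w̄|²}/√(|v̄-w̄|²+ξ²)`;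
moreover, with `η = √(2Θ₁/m₁) · erf⁻¹(1/2)`, whenever `0 < ρ₀ < 2κη` the radius `ρ₁` can be
chosen with `ρ₁ ≥ √(η² - ρ₀²/(4κ²))`. -/
theorem planar_gaussian_cutoff
    (m1 Θ1 : ℝ) (hm1 : 0 < m1) (hΘ1 : 0 < Θ1)
    (a : ℝ) (ha : a = m1 / (2 * Θ1))
    (κ : ℝ) (hκ : κ ∈ Set.Ioo (0 : ℝ) 1)
    (r0 : ℝ) (hr0 : 0 < r0)
    (hr0erf : (2 / Real.sqrt π) * (∫ t in (0 : ℝ)..r0, Real.exp (-t ^ 2)) = 1 / 2)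
    (η : ℝ) (hη : η = Real.sqrt (2 * Θ1 / m1) * r0) :
    ∀ ρ0 : ℝ, 0 < ρ0 → ∃ ρ1 : ℝ, 0 < ρ1 ∧
      (∀ (v : E2) (ξ : ℝ), ξ ∈ Set.Icc (0 : ℝ) (ρ0 / (2 * κ)) →
        (∫ w in {w : E2 | ‖w - v‖ ≤ ρ1},
            Real.exp (-a * ‖w‖ ^ 2) / Real.sqrt (‖v - w‖ ^ 2 + ξ ^ 2)) ≤
          (1 / 2) * ∫ w : E2,
            Real.exp (-a * ‖w‖ ^ 2) / Real.sqrt (‖v - w‖ ^ 2 + ξ ^ 2)) ∧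
      (ρ0 < 2 * κ * η → Real.sqrt (η ^ 2 - ρ0 ^ 2 / (4 * κ ^ 2)) ≤ ρ1) := by
  intro ρ0 hρ0
  have hκ0 : 0 < κ := hκ.1
  have ha' : 0 < a := by rw [ha]; positivity
  have hη0 : 0 < η := by
    rw [hη]
    exact mul_pos (Real.sqrt_pos.mpr (by positivity)) hr0
  have hr : Real.sqrt a * η = r0 := by
    rw [hη, ← mul_assoc, ← Real.sqrt_mul ha'.le,
      show a * (2 * Θ1 / m1) = 1 by rw [ha]; field_simp, Real.sqrt_one, one_mul]
  have hπ : (0:ℝ) < Real.sqrt π := Real.sqrt_pos.mpr Real.pi_pos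
  have herf : (∫ t in (0:ℝ)..r0, Real.exp (-t^2)) = Real.sqrt π / 4 := by
    field_simp at hr0erf
    linarith
  have hhalf := PGC.eta_half ha' hη0 hr herf
  by_cases hc : ρ0 < 2 * κ * η
  · have hpos : 0 < η^2 - ρ0^2/(4*κ^2) := by
      rw [sub_pos, div_lt_iff₀ (by positivity)]
      nlinarith
    refine ⟨Real.sqrt (η^2 - ρ0^2/(4*κ^2)), Real.sqrt_pos.mpr hpos,
      fun v ξ hξ => ?_, fun _ => by norm_num⟩
    apply PGC.euclid_final ha' hξ.1 (Real.sqrt_pos.mpr hpos) v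
    have h1 : (Real.sqrt (η^2 - ρ0^2/(4*κ^2)))^2 = η^2 - ρ0^2/(4*κ^2) :=
      Real.sq_sqrt hpos.le
    have h2 : ξ^2 ≤ ρ0^2/(4*κ^2) := by
      have h4 : (ρ0/(2*κ))^2 = ρ0^2/(4*κ^2) := by rw [div_pow]; congr 1; ring
      rw [← h4]
      exact pow_le_pow_left₀ hξ.1 hξ.2 2
    have hβη : Real.sqrt ((Real.sqrt (η^2 - ρ0^2/(4*κ^2)))^2 + ξ^2) ≤ η := by
      calc Real.sqrt ((Real.sqrt (η^2 - ρ0^2/(4*κ^2)))^2 + ξ^2)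
          ≤ Real.sqrt (η^2) := Real.sqrt_le_sqrt (by rw [h1]; linarith)
        _ = η := Real.sqrt_sq hη0.le
    have hξβ : ξ ≤ Real.sqrt ((Real.sqrt (η^2 - ρ0^2/(4*κ^2)))^2 + ξ^2) := by
      nth_rewrite 1 [show ξ = Real.sqrt (ξ^2) from (Real.sqrt_sq hξ.1).symm]
      exact Real.sqrt_le_sqrt (by nlinarith [sq_nonneg (Real.sqrt (η^2 - ρ0^2/(4*κ^2)))])
    exact PGC.front_le_tail_of_le_eta ha' hξ.1 hξβ hβη hhalf
  · refine ⟨min 1 (Real.exp (-(a*((ρ0/(2*κ))+2)^2))), lt_min one_pos (Real.exp_pos _),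
      fun v ξ hξ => ?_, fun h => absurd h hc⟩
    apply PGC.euclid_final ha' hξ.1 (lt_min one_pos (Real.exp_pos _)) v
    exact PGC.front_le_tail_small ha' hξ.1 hξ.2 (lt_min one_pos (Real.exp_pos _))
      (min_le_left _ _) (min_le_right _ _)
end
end

section
/- Lower bound for the planar Gaussian potential: let a = m₁/(2Θ₁), κ ∈ (0,1) and ρ₀ > 0. There exists a constant C > 0 (depending only on a, κ and ρ₀) such that for all v̄ ∈ ℝ² and all ξ ∈ [0, ρ₀/(2κ)], ∫_{ℝ²} exp(−a|w̄|²)/√(|v̄−w̄|² + ξ²) dw̄ ≥ C/(1 + |v̄|). -/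
open MeasureTheory Real
open Set Metric

noncomputable section

def e2equiv : E2 ≃ᵐ ℝ × ℝ :=
  (MeasurableEquiv.toLp 2 (Fin 2 → ℝ)).symm.trans (MeasurableEquiv.piFinTwo fun _ => ℝ)

lemma e2equiv_apply (w : E2) : e2equiv w = (w 0, w 1) := rfl

lemma e2equiv_mp : MeasurePreserving e2equiv volume volume :=
  (volume_preserving_piFinTwo fun _ => ℝ).comp
    (EuclideanSpace.volume_preserving_symm_measurableEquiv_toLp (Fin 2))

lemma norm_sq_eq (w : E2) : ‖w‖ ^ 2 = (w 0) ^ 2 + (w 1) ^ 2 := by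
  rw [EuclideanSpace.norm_eq, Real.sq_sqrt (by positivity)]
  simp [Fin.sum_univ_two, sq_abs]

lemma abs_coord_le (w : E2) (i : Fin 2) : |w i| ≤ ‖w‖ := by
  have h := norm_sq_eq w
  have h2 : (w i) ^ 2 ≤ ‖w‖ ^ 2 := by
    fin_cases i
    · show (w 0) ^ 2 ≤ ‖w‖ ^ 2
      nlinarith [sq_nonneg (w 1)]
    · show (w 1) ^ 2 ≤ ‖w‖ ^ 2
      nlinarith [sq_nonneg (w 0)]
  calc |w i| = Real.sqrt ((w i) ^ 2) := (Real.sqrt_sq_eq_abs _).symm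
    _ ≤ Real.sqrt (‖w‖ ^ 2) := Real.sqrt_le_sqrt h2
    _ = ‖w‖ := by rw [Real.sqrt_sq (norm_nonneg _)]

lemma gaussian_integrable {b : ℝ} (hb : 0 < b) :
    Integrable (fun w : E2 => Real.exp (-b * ‖w‖ ^ 2)) := by
  have h1 : Integrable (fun t : ℝ => Real.exp (-b * t ^ 2)) := integrable_exp_neg_mul_sq hb
  have hp : Integrable (fun p : ℝ × ℝ => Real.exp (-b * p.1 ^ 2) * Real.exp (-b * p.2 ^ 2)) := by
    have := h1.mul_prod h1
    rwa [← Measure.volume_eq_prod] at this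
  have h2 := (e2equiv_mp.integrable_comp_emb e2equiv.measurableEmbedding).mpr hp
  refine h2.congr (Filter.Eventually.of_forall fun w => ?_)
  show Real.exp (-b * (w 0) ^ 2) * Real.exp (-b * (w 1) ^ 2) = Real.exp (-b * ‖w‖ ^ 2)
  rw [← Real.exp_add, norm_sq_eq w]
  ring_nf

lemma cos_neg_half_pi : Real.cos (-(1/2) * π) = 0 := by
  rw [show (-(1/2) : ℝ) * π = -(π/2) by ring, Real.cos_neg, Real.cos_pi_div_two]

lemma abs_rpow_half_eq (t : ℝ) :
    |t| ^ (-(1/2) : ℝ) = t ^ (-(1/2) : ℝ) + (-t) ^ (-(1/2) : ℝ) := by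
  rcases lt_trichotomy t 0 with h | h | h
  · rw [abs_of_neg h, Real.rpow_def_of_neg h, cos_neg_half_pi, mul_zero, zero_add]
  · simp [h, Real.zero_rpow (by norm_num : (-(1/2) : ℝ) ≠ 0)]
  · rw [abs_of_pos h, Real.rpow_def_of_neg (neg_lt_zero.mpr h), cos_neg_half_pi, mul_zero,
      add_zero]

lemma singular_integrableOn :
    IntegrableOn (fun t : ℝ => |t| ^ (-(1/2) : ℝ)) (Icc (-1 : ℝ) 1) := by
  have h1 : IntervalIntegrable (fun t : ℝ => t ^ (-(1/2) : ℝ)) volume (-1) 1 :=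
    intervalIntegral.intervalIntegrable_rpow' (by norm_num)
  have h1' : IntervalIntegrable (fun t : ℝ => t ^ (-(1/2) : ℝ)) volume 1 (-1) :=
    intervalIntegral.intervalIntegrable_rpow' (by norm_num)
  have h2 : IntervalIntegrable (fun t : ℝ => (-t) ^ (-(1/2) : ℝ)) volume (-1) 1 := by
    have := (IntervalIntegrable.iff_comp_neg (f := fun t : ℝ => t ^ (-(1/2) : ℝ)) (by simp)).mp h1'
    simpa using this
  have heq : (fun t : ℝ => |t| ^ (-(1/2) : ℝ))
      = fun t => t ^ (-(1/2) : ℝ) + (-t) ^ (-(1/2) : ℝ) := funext abs_rpow_half_eq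
  rw [integrableOn_Icc_iff_integrableOn_Ioc, heq]
  have h3 := (h1.add h2)
  rw [intervalIntegrable_iff, uIoc_of_le (by norm_num : (-1:ℝ) ≤ 1)] at h3
  exact h3

def g1 : ℝ → ℝ := (Icc (-1 : ℝ) 1).indicator (fun t => |t| ^ (-(1/2) : ℝ))

lemma g1_integrable : Integrable g1 :=
  singular_integrableOn.integrable_indicator measurableSet_Icc

lemma g1_nonneg (t : ℝ) : 0 ≤ g1 t := by
  unfold g1
  apply Set.indicator_nonneg
  intro x _
  positivity

lemma Q_integrable : Integrable (fun w : E2 => g1 (w 0) * g1 (w 1)) := by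
  have hp : Integrable (fun p : ℝ × ℝ => g1 p.1 * g1 p.2) := by
    have := g1_integrable.mul_prod g1_integrable
    rwa [← Measure.volume_eq_prod] at this
  exact (e2equiv_mp.integrable_comp_emb e2equiv.measurableEmbedding).mpr hp

lemma coord_zero_null :
    (volume : Measure E2) {w : E2 | w 0 = 0 ∨ w 1 = 0} = 0 := by
  have hset : {w : E2 | w 0 = 0 ∨ w 1 = 0}
      = e2equiv ⁻¹' (({0} ×ˢ (univ : Set ℝ)) ∪ ((univ : Set ℝ) ×ˢ {0})) := by
    ext w
    simp [e2equiv_apply, Set.mem_prod, eq_comm]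
  rw [hset, e2equiv_mp.measure_preimage]
  · apply measure_union_null
    · rw [Measure.volume_eq_prod, Measure.prod_prod]
      simp
    · rw [Measure.volume_eq_prod, Measure.prod_prod]
      simp
  · exact (((measurableSet_singleton 0).prod MeasurableSet.univ).union
      (MeasurableSet.univ.prod (measurableSet_singleton 0))).nullMeasurableSet

lemma f_measurable (b : ℝ) (v : E2) (ξ : ℝ) :
    Measurable (fun w : E2 => Real.exp (-b * ‖w‖ ^ 2) / Real.sqrt (‖v - w‖ ^ 2 + ξ ^ 2)) := by
  apply Measurable.div
  · exact (Real.continuous_exp.comp (by fun_prop)).measurable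
  · exact (Real.continuous_sqrt.comp (by fun_prop)).measurable

lemma f_integrable {b : ℝ} (hb : 0 < b) (v : E2) {ξ : ℝ} (hξ : 0 ≤ ξ) :
    Integrable (fun w : E2 => Real.exp (-b * ‖w‖ ^ 2) / Real.sqrt (‖v - w‖ ^ 2 + ξ ^ 2)) := by
  set f := fun w : E2 => Real.exp (-b * ‖w‖ ^ 2) / Real.sqrt (‖v - w‖ ^ 2 + ξ ^ 2) with hf
  have hfm : AEStronglyMeasurable f volume := (f_measurable b v ξ).aestronglyMeasurable
  have hfnn : ∀ w, 0 ≤ f w := fun w => div_nonneg (Real.exp_pos _).le (Real.sqrt_nonneg _)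
  rcases hξ.lt_or_eq with hpos | hzero
  · -- ξ > 0
    apply Integrable.mono' ((gaussian_integrable hb).mul_const ξ⁻¹) hfm
    refine Filter.Eventually.of_forall fun w => ?_
    rw [Real.norm_eq_abs, abs_of_nonneg (hfnn w), ← div_eq_mul_inv]
    have hle : ξ ≤ Real.sqrt (‖v - w‖ ^ 2 + ξ ^ 2) :=
      calc ξ = Real.sqrt (ξ ^ 2) := (Real.sqrt_sq hξ).symm
        _ ≤ _ := Real.sqrt_le_sqrt (by nlinarith [sq_nonneg ‖v - w‖])
    exact div_le_div_of_nonneg_left (Real.exp_pos _).le hpos hle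
  · -- ξ = 0
    subst hzero
    have hfeq : ∀ w : E2, f w = Real.exp (-b * ‖w‖ ^ 2) / ‖w - v‖ := by
      intro w
      simp only [hf]
      rw [show (0:ℝ) ^ 2 = 0 by norm_num, add_zero, Real.sqrt_sq (norm_nonneg _), norm_sub_rev]
    rw [← integrableOn_univ, ← Set.union_compl_self (Metric.ball v 1)]
    apply IntegrableOn.union
    · -- on the ball : dominated by the AM-GM majorant
      have hQ : Integrable (fun w : E2 => g1 ((w - v) 0) * g1 ((w - v) 1)) :=
        Q_integrable.comp_sub_right v
      apply Integrable.mono' hQ.integrableOn hfm.restrict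
      have hNull : (volume : Measure E2) {w : E2 | (w - v) 0 = 0 ∨ (w - v) 1 = 0} = 0 := by
        have hpre : {w : E2 | (w - v) 0 = 0 ∨ (w - v) 1 = 0}
            = (fun w : E2 => w - v) ⁻¹' {w : E2 | w 0 = 0 ∨ w 1 = 0} := rfl
        have hm : MeasurableSet {w : E2 | w 0 = 0 ∨ w 1 = 0} := by
          have h0 : Measurable fun w : E2 => w 0 :=
            (measurable_fst.comp e2equiv.measurable)
          have h1 : Measurable fun w : E2 => w 1 :=
            (measurable_snd.comp e2equiv.measurable)
          exact (h0 (measurableSet_singleton 0)).union (h1 (measurableSet_singleton 0))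
        rw [hpre, (measurePreserving_sub_right volume v).measure_preimage
          hm.nullMeasurableSet]
        exact coord_zero_null
      have hae : ∀ᵐ w : E2, ¬((w - v) 0 = 0 ∨ (w - v) 1 = 0) :=
        measure_eq_zero_iff_ae_notMem.mp hNull
      filter_upwards [ae_restrict_mem measurableSet_ball, ae_restrict_of_ae hae]
        with w hw hw0
      push_neg at hw0
      obtain ⟨h0, h1⟩ := hw0
      set x := w - v with hxdef
      have hxlt : ‖x‖ < 1 := by rwa [mem_ball_iff_norm] at hw
      have hxpos : 0 < ‖x‖ := by
        rcases eq_or_ne x 0 with h | h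
        · exact absurd (by rw [h]; rfl) h0
        · exact norm_pos_iff.mpr h
      have habs0 : |x 0| ≤ ‖x‖ := abs_coord_le x 0
      have habs1 : |x 1| ≤ ‖x‖ := abs_coord_le x 1
      have hmem0 : x 0 ∈ Icc (-1:ℝ) 1 := abs_le.mp (habs0.trans hxlt.le)
      have hmem1 : x 1 ∈ Icc (-1:ℝ) 1 := abs_le.mp (habs1.trans hxlt.le)
      have hg0 : g1 (x 0) = |x 0| ^ (-(1/2) : ℝ) := Set.indicator_of_mem hmem0 _
      have hg1 : g1 (x 1) = |x 1| ^ (-(1/2) : ℝ) := Set.indicator_of_mem hmem1 _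
      have hppos : 0 < |x 0| * |x 1| :=
        mul_pos (abs_pos.mpr h0) (abs_pos.mpr h1)
      have hsqrtle : Real.sqrt (|x 0| * |x 1|) ≤ ‖x‖ := by
        rw [show ‖x‖ = Real.sqrt (‖x‖ ^ 2) from (Real.sqrt_sq (norm_nonneg _)).symm]
        apply Real.sqrt_le_sqrt
        rw [norm_sq_eq]
        nlinarith [sq_nonneg (|x 0| - |x 1|), sq_abs (x 0), sq_abs (x 1), hppos.le]
      calc ‖f w‖ = f w := by rw [Real.norm_eq_abs, abs_of_nonneg (hfnn w)]
        _ = Real.exp (-b * ‖w‖ ^ 2) / ‖x‖ := hfeq w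
        _ ≤ 1 / ‖x‖ :=
            div_le_div_of_nonneg_right
              (Real.exp_le_one_iff.mpr (by nlinarith [sq_nonneg ‖w‖])) (norm_nonneg _)
        _ = ‖x‖⁻¹ := one_div _
        _ ≤ (Real.sqrt (|x 0| * |x 1|))⁻¹ := by
            exact inv_anti₀ (Real.sqrt_pos.mpr hppos) hsqrtle
        _ = |x 0| ^ (-(1/2) : ℝ) * |x 1| ^ (-(1/2) : ℝ) := by
            rw [Real.sqrt_mul (abs_nonneg _), mul_inv, Real.sqrt_eq_rpow, Real.sqrt_eq_rpow,
              ← Real.rpow_neg (abs_nonneg _), ← Real.rpow_neg (abs_nonneg _)]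
        _ = g1 (x 0) * g1 (x 1) := by rw [hg0, hg1]
    · -- off the ball : dominated by the Gaussian
      apply Integrable.mono' (gaussian_integrable hb).integrableOn hfm.restrict
      filter_upwards [ae_restrict_mem measurableSet_ball.compl] with w hw
      have h1le : 1 ≤ ‖w - v‖ := by
        rw [Set.mem_compl_iff, mem_ball_iff_norm, not_lt] at hw
        exact hw
      rw [Real.norm_eq_abs, abs_of_nonneg (hfnn w), hfeq w]
      exact div_le_self (Real.exp_pos _).le h1le

/-- Lower bound for the planar Gaussian potential: with `a = m₁/(2Θ₁)`,
`κ ∈ (0,1)` and `ρ₀ > 0`, there exists `C > 0` such that for all `v̄ ∈ ℝ²` and all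
`ξ ∈ [0, ρ₀/(2κ)]`, `∫_{ℝ²} e^{-a|w̄|²}/√(|v̄-w̄|²+ξ²) dw̄ ≥ C/(1+|v̄|)`. -/
theorem planar_gaussian_potential_lower_bound
    (m1 Θ1 : ℝ) (hm1 : 0 < m1) (hΘ1 : 0 < Θ1)
    (a : ℝ) (ha : a = m1 / (2 * Θ1))
    (κ : ℝ) (hκ : κ ∈ Set.Ioo (0 : ℝ) 1)
    (ρ0 : ℝ) (hρ0 : 0 < ρ0) :
    ∃ C : ℝ, 0 < C ∧ ∀ (v : E2) (ξ : ℝ), ξ ∈ Set.Icc (0 : ℝ) (ρ0 / (2 * κ)) →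
      C / (1 + ‖v‖) ≤
        ∫ w : E2, Real.exp (-a * ‖w‖ ^ 2) / Real.sqrt (‖v - w‖ ^ 2 + ξ ^ 2) := by
  have hapos : 0 < a := by
    rw [ha]; positivity
  set M : ℝ := ρ0 / (2 * κ) with hM
  have hMpos : 0 < M := by
    rw [hM]; exact div_pos hρ0 (by nlinarith [hκ.1])
  set V : ℝ := (volume (Metric.ball (0 : E2) 1)).toReal with hV
  have hVpos : 0 < V := by
    rw [hV]
    apply ENNReal.toReal_pos
    · exact (Metric.measure_ball_pos volume (0 : E2) one_pos).ne'
    · exact measure_ball_lt_top.ne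
  refine ⟨Real.exp (-a) * V / (1 + M), by positivity, fun v ξ hξ => ?_⟩
  obtain ⟨hξ0, hξM⟩ := hξ
  set f := fun w : E2 => Real.exp (-a * ‖w‖ ^ 2) / Real.sqrt (‖v - w‖ ^ 2 + ξ ^ 2) with hf
  have hfint : Integrable f := f_integrable hapos v hξ0
  have hfnn : ∀ w, 0 ≤ f w := fun w => div_nonneg (Real.exp_pos _).le (Real.sqrt_nonneg _)
  set c : ℝ := Real.exp (-a) / ((1 + M) * (1 + ‖v‖)) with hc
  have hvn : (0:ℝ) ≤ ‖v‖ := norm_nonneg v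
  have step1 : Real.exp (-a) * V / (1 + M) / (1 + ‖v‖) = V • c := by
    rw [hc, smul_eq_mul]
    field_simp
  have step2 : V • c = ∫ _ in Metric.ball (0 : E2) 1, c := by
    rw [setIntegral_const]
    rfl
  have step3 : (∫ _ in Metric.ball (0 : E2) 1, c) ≤ ∫ w in Metric.ball (0 : E2) 1, f w := by
    apply setIntegral_mono_ae_restrict
    · exact integrableOn_const measure_ball_lt_top.ne
    · exact hfint.integrableOn
    · filter_upwards [ae_restrict_mem measurableSet_ball,
        ae_restrict_of_ae (measure_eq_zero_iff_ae_notMem.mp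
          (measure_singleton v : volume ({v} : Set E2) = 0))] with w hw hwv
      have hwv' : w ≠ v := hwv
      have hwn : ‖w‖ < 1 := by rwa [mem_ball_zero_iff] at hw
      have hden_pos : 0 < Real.sqrt (‖v - w‖ ^ 2 + ξ ^ 2) := by
        apply Real.sqrt_pos.mpr
        have : 0 < ‖v - w‖ := norm_pos_iff.mpr (sub_ne_zero.mpr (Ne.symm hwv'))
        nlinarith [sq_nonneg ξ]
      have hden_le : Real.sqrt (‖v - w‖ ^ 2 + ξ ^ 2) ≤ (1 + M) * (1 + ‖v‖) := by
        have h1 : ‖v - w‖ ≤ 1 + ‖v‖ := by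
          calc ‖v - w‖ ≤ ‖v‖ + ‖w‖ := norm_sub_le v w
            _ ≤ 1 + ‖v‖ := by nlinarith
        have h2 : Real.sqrt (‖v - w‖ ^ 2 + ξ ^ 2) ≤ (1 + ‖v‖) + M := by
          calc Real.sqrt (‖v - w‖ ^ 2 + ξ ^ 2) ≤ Real.sqrt (((1 + ‖v‖) + M) ^ 2) := by
                apply Real.sqrt_le_sqrt
                nlinarith [norm_nonneg (v - w)]
            _ = (1 + ‖v‖) + M := Real.sqrt_sq (by nlinarith)
        nlinarith
      have hnum : Real.exp (-a) ≤ Real.exp (-a * ‖w‖ ^ 2) := by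
        apply Real.exp_le_exp.mpr
        have hsq : ‖w‖ ^ 2 ≤ 1 := by nlinarith [norm_nonneg w]
        nlinarith [mul_le_mul_of_nonneg_left hsq hapos.le]
      rw [hc]
      calc Real.exp (-a) / ((1 + M) * (1 + ‖v‖))
          ≤ Real.exp (-a * ‖w‖ ^ 2) / ((1 + M) * (1 + ‖v‖)) :=
            div_le_div_of_nonneg_right hnum (by positivity)
        _ ≤ Real.exp (-a * ‖w‖ ^ 2) / Real.sqrt (‖v - w‖ ^ 2 + ξ ^ 2) :=
            div_le_div_of_nonneg_left (Real.exp_pos _).le hden_pos hden_le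
  have step4 : (∫ w in Metric.ball (0 : E2) 1, f w) ≤ ∫ w, f w :=
    setIntegral_le_integral hfint (Filter.Eventually.of_forall hfnn)
  calc Real.exp (-a) * V / (1 + M) / (1 + ‖v‖) = V • c := step1
    _ = ∫ _ in Metric.ball (0 : E2) 1, c := step2
    _ ≤ ∫ w in Metric.ball (0 : E2) 1, f w := step3
    _ ≤ ∫ w, f w := step4
end
end
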